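/- arXiv:1710.08394 — 14 statements merged into one kernel-verified Lean document; each statement's English description precedes it below -/
import Mathlib

section
/- Let v and w be independent, integrable, real-valued random variables on a probability space, let p be a real number, and let q = min(P[v ≥ p], P[w ≤ p]). Then q · E[(v − w)·1(w ≤ v)] ≤ E[(v − w)·1(w ≤ p ∧ p ≤ v)]; in particular, if q > 0 then OPT ≤ (1/q)·GFT(p). -/
open MeasureTheory ProbabilityTheory

theorem stmt0 {Ω : Type*} [MeasurableSpace Ω] (μ : Measure Ω) [IsProbabilityMeasure μ]
    (v w : Ω → ℝ) (hv : Measurable v) (hw : Measurable w)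
    (hvi : Integrable v μ) (hwi : Integrable w μ)
    (hindep : IndepFun v w μ) (p : ℝ) (q : ℝ)
    (hq : q = min (μ {ω | p ≤ v ω}).toReal (μ {ω | w ω ≤ p}).toReal) :
    (q * ∫ ω, (if w ω ≤ v ω then v ω - w ω else 0) ∂μ ≤
        ∫ ω, (if w ω ≤ p ∧ p ≤ v ω then v ω - w ω else 0) ∂μ) ∧
      (0 < q →
        ∫ ω, (if w ω ≤ v ω then v ω - w ω else 0) ∂μ ≤
          (1 / q) * ∫ ω, (if w ω ≤ p ∧ p ≤ v ω then v ω - w ω else 0) ∂μ) := by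
  set A : Set Ω := {ω | p ≤ v ω} with hAdef
  set B : Set Ω := {ω | w ω ≤ p} with hBdef
  have hAm : MeasurableSet A := measurableSet_le measurable_const hv
  have hBm : MeasurableSet B := measurableSet_le hw measurable_const
  set a : ℝ := (μ A).toReal with hadef
  set b : ℝ := (μ B).toReal with hbdef
  set f : Ω → ℝ := (fun x => max (x - p) 0) ∘ v with hfdef
  set g : Ω → ℝ := (fun x => max (p - x) 0) ∘ w with hgdef
  have hfi : Integrable f μ := (hvi.sub (integrable_const p)).pos_part
  have hgi : Integrable g μ := ((integrable_const p).sub hwi).pos_part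
  set iA : Ω → ℝ := ((fun x => if p ≤ x then (1:ℝ) else 0) ∘ v) with hiAdef
  set iB : Ω → ℝ := ((fun x => if x ≤ p then (1:ℝ) else 0) ∘ w) with hiBdef
  have hiA_eq : iA = A.indicator 1 := by
    funext ω
    by_cases h : p ≤ v ω <;>
      simp [hiAdef, hAdef, Set.indicator_apply, h]
  have hiB_eq : iB = B.indicator 1 := by
    funext ω
    by_cases h : w ω ≤ p <;>
      simp [hiBdef, hBdef, Set.indicator_apply, h]
  have hiAi : Integrable iA μ := by
    rw [hiA_eq]; exact (integrable_const 1).indicator hAm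
  have hiBi : Integrable iB μ := by
    rw [hiB_eq]; exact (integrable_const 1).indicator hBm
  have hiA_int : ∫ ω, iA ω ∂μ = a := by
    rw [hiA_eq]; exact integral_indicator_one hAm
  have hiB_int : ∫ ω, iB ω ∂μ = b := by
    rw [hiB_eq]; exact integral_indicator_one hBm
  have hφm : Measurable (fun x : ℝ => max (x - p) 0) :=
    (measurable_id.sub measurable_const).max measurable_const
  have hψm : Measurable (fun x : ℝ => max (p - x) 0) :=
    (measurable_const.sub measurable_id).max measurable_const
  have hχm : Measurable (fun x : ℝ => if x ≤ p then (1:ℝ) else 0) := by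
    have : (fun x : ℝ => if x ≤ p then (1:ℝ) else 0)
        = (Set.Iic p).indicator (fun _ => (1:ℝ)) := by
      funext x; by_cases h : x ≤ p <;> simp [Set.indicator_apply, h]
    rw [this]; exact measurable_const.indicator measurableSet_Iic
  have hρm : Measurable (fun x : ℝ => if p ≤ x then (1:ℝ) else 0) := by
    have : (fun x : ℝ => if p ≤ x then (1:ℝ) else 0)
        = (Set.Ici p).indicator (fun _ => (1:ℝ)) := by
      funext x; by_cases h : p ≤ x <;> simp [Set.indicator_apply, h]
    rw [this]; exact measurable_const.indicator measurableSet_Ici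
  have hind1 : IndepFun f iB μ := hindep.comp hφm hχm
  have hind2 : IndepFun g iA μ := (hindep.symm).comp hψm hρm
  -- pointwise decomposition of the GFT integrand
  have hptw : ∀ ω, (if w ω ≤ p ∧ p ≤ v ω then v ω - w ω else 0)
      = f ω * iB ω + g ω * iA ω := by
    intro ω
    simp only [hfdef, hgdef, hiAdef, hiBdef, Function.comp_apply]
    by_cases h1 : w ω ≤ p <;> by_cases h2 : p ≤ v ω
    · rw [if_pos ⟨h1, h2⟩, if_pos h1, if_pos h2,
        max_eq_left (by linarith), max_eq_left (by linarith)]; ring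
    · rw [if_neg (by tauto), if_pos h1, if_neg h2, mul_zero, mul_one, add_zero,
        max_eq_right (by linarith [not_le.mp h2])]
    · rw [if_neg (by tauto), if_neg h1, if_pos h2, mul_zero, mul_one, zero_add,
        max_eq_right (by linarith [not_le.mp h1])]
    · rw [if_neg (by tauto), if_neg h1, if_neg h2, mul_zero, mul_zero, add_zero]
  -- integrability of products
  have hfiB : Integrable (fun ω => f ω * iB ω) μ := by
    have : (fun ω => f ω * iB ω) = B.indicator f := by
      funext ω
      rw [hiB_eq]
      by_cases h : ω ∈ B <;> simp [Set.indicator_apply, h]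
    rw [this]; exact hfi.indicator hBm
  have hgiA : Integrable (fun ω => g ω * iA ω) μ := by
    have : (fun ω => g ω * iA ω) = A.indicator g := by
      funext ω
      rw [hiA_eq]
      by_cases h : ω ∈ A <;> simp [Set.indicator_apply, h]
    rw [this]; exact hgi.indicator hAm
  -- the GFT integral
  have hGFT : ∫ ω, (if w ω ≤ p ∧ p ≤ v ω then v ω - w ω else 0) ∂μ
      = (∫ ω, f ω ∂μ) * b + a * (∫ ω, g ω ∂μ) := by
    rw [integral_congr_ae (Filter.Eventually.of_forall hptw),
      integral_add hfiB hgiA]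
    have e1 : ∫ ω, f ω * iB ω ∂μ = (∫ ω, f ω ∂μ) * b := by
      have h := hind1.integral_mul_eq_mul_integral hfi.aestronglyMeasurable hiBi.aestronglyMeasurable
      simp only [Pi.mul_apply] at h
      rw [h, hiB_int]
    have e2 : ∫ ω, g ω * iA ω ∂μ = a * (∫ ω, g ω ∂μ) := by
      have h := hind2.integral_mul_eq_mul_integral hgi.aestronglyMeasurable hiAi.aestronglyMeasurable
      simp only [Pi.mul_apply] at h
      rw [h, hiA_int, mul_comm]
    rw [e1, e2]
  -- OPT integrand is integrable and bounded by f + g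
  have hOPTi : Integrable (fun ω => if w ω ≤ v ω then v ω - w ω else 0) μ := by
    have : (fun ω => if w ω ≤ v ω then v ω - w ω else 0)
        = {ω | w ω ≤ v ω}.indicator (fun ω => v ω - w ω) := by
      funext ω
      by_cases h : w ω ≤ v ω <;> simp [Set.indicator_apply, h, Set.mem_setOf_eq]
    rw [this]; exact (hvi.sub hwi).indicator (measurableSet_le hw hv)
  have hOPT_le : ∫ ω, (if w ω ≤ v ω then v ω - w ω else 0) ∂μ
      ≤ (∫ ω, f ω ∂μ) + (∫ ω, g ω ∂μ) := by
    rw [← integral_add hfi hgi]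
    refine integral_mono hOPTi (hfi.add hgi) fun ω => ?_
    simp only [hfdef, hgdef, Function.comp_apply, Pi.add_apply]
    by_cases h : w ω ≤ v ω
    · rw [if_pos h]
      have h3 := le_max_left (v ω - p) 0
      have h4 := le_max_left (p - w ω) 0
      linarith
    · rw [if_neg h]
      have h3 := le_max_right (v ω - p) 0
      have h4 := le_max_right (p - w ω) 0
      linarith
  have hOPT_nonneg : 0 ≤ ∫ ω, (if w ω ≤ v ω then v ω - w ω else 0) ∂μ := by
    refine integral_nonneg fun ω => ?_
    simp only [Pi.zero_apply]
    by_cases h : w ω ≤ v ω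
    · rw [if_pos h]; linarith
    · rw [if_neg h]
  have hf_nonneg : 0 ≤ ∫ ω, f ω ∂μ :=
    integral_nonneg fun ω => le_max_right _ _
  have hg_nonneg : 0 ≤ ∫ ω, g ω ∂μ :=
    integral_nonneg fun ω => le_max_right _ _
  have hq0 : 0 ≤ q := by
    rw [hq]; exact le_min ENNReal.toReal_nonneg ENNReal.toReal_nonneg
  have hqa : q ≤ a := by rw [hq]; exact min_le_left _ _
  have hqb : q ≤ b := by rw [hq]; exact min_le_right _ _
  have main : q * ∫ ω, (if w ω ≤ v ω then v ω - w ω else 0) ∂μ ≤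
      ∫ ω, (if w ω ≤ p ∧ p ≤ v ω then v ω - w ω else 0) ∂μ := by
    rw [hGFT]
    calc q * ∫ ω, (if w ω ≤ v ω then v ω - w ω else 0) ∂μ
        ≤ q * ((∫ ω, f ω ∂μ) + (∫ ω, g ω ∂μ)) :=
          mul_le_mul_of_nonneg_left hOPT_le hq0
      _ ≤ (∫ ω, f ω ∂μ) * b + a * (∫ ω, g ω ∂μ) := by
          nlinarith [mul_le_mul_of_nonneg_left hqb hf_nonneg,
            mul_le_mul_of_nonneg_left hqa hg_nonneg]
  refine ⟨main, fun hqpos => ?_⟩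
  rw [one_div, ← div_eq_inv_mul, le_div_iff₀ hqpos]
  linarith [main]
end

section
/- Let v and w be independent, integrable, real-valued random variables on a probability space, and let p be a real number such that P[v ≥ p] = P[w ≤ p]. Then, with r = P[v ≥ w], it holds that r · E[(v − w)·1(w ≤ v)] ≤ 2 · E[(v − w)·1(w ≤ p ∧ p ≤ v)]; in particular, if r > 0 then OPT ≤ (2/r)·GFT(p). -/
open MeasureTheory ProbabilityTheory

theorem stmt1 {Ω : Type*} [MeasurableSpace Ω] (μ : Measure Ω) [IsProbabilityMeasure μ]
    (v w : Ω → ℝ) (hv : Measurable v) (hw : Measurable w)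
    (hvi : Integrable v μ) (hwi : Integrable w μ)
    (hindep : IndepFun v w μ) (p : ℝ)
    (hp : (μ {ω | p ≤ v ω}).toReal = (μ {ω | w ω ≤ p}).toReal)
    (r : ℝ) (hr : r = (μ {ω | w ω ≤ v ω}).toReal) :
    (r * ∫ ω, (if w ω ≤ v ω then v ω - w ω else 0) ∂μ ≤
        2 * ∫ ω, (if w ω ≤ p ∧ p ≤ v ω then v ω - w ω else 0) ∂μ) ∧
      (0 < r →
        ∫ ω, (if w ω ≤ v ω then v ω - w ω else 0) ∂μ ≤
          (2 / r) * ∫ ω, (if w ω ≤ p ∧ p ≤ v ω then v ω - w ω else 0) ∂μ) := by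
  set q : ℝ := (μ {ω | w ω ≤ p}).toReal with hq
  set φ : ℝ → ℝ := fun x => max (x - p) 0 with hφdef
  set φ' : ℝ → ℝ := fun y => max (p - y) 0 with hφ'def
  set ψ : ℝ → ℝ := fun y => if y ≤ p then (1:ℝ) else 0 with hψdef
  set ψ' : ℝ → ℝ := fun x => if p ≤ x then (1:ℝ) else 0 with hψ'def
  have hφm : Measurable φ := (measurable_id.sub measurable_const).max measurable_const
  have hφ'm : Measurable φ' := (measurable_const.sub measurable_id).max measurable_const
  have hψm : Measurable ψ := by
    have : ψ = Set.indicator (Set.Iic p) (fun _ => (1:ℝ)) := by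
      funext y; by_cases h : y ≤ p <;> simp [hψdef, Set.indicator, Set.mem_Iic, h]
    rw [this]; exact (measurable_const (a := (1:ℝ))).indicator measurableSet_Iic
  have hψ'm : Measurable ψ' := by
    have : ψ' = Set.indicator (Set.Ici p) (fun _ => (1:ℝ)) := by
      funext y; by_cases h : p ≤ y <;> simp [hψ'def, Set.indicator, Set.mem_Ici, h]
    rw [this]; exact (measurable_const (a := (1:ℝ))).indicator measurableSet_Ici
  have hmw : MeasurableSet {ω | w ω ≤ p} := hw measurableSet_Iic
  have hmv : MeasurableSet {ω | p ≤ v ω} := hv measurableSet_Ici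
  -- integrability
  have hfv : Integrable (fun ω => φ (v ω)) μ := (hvi.sub (integrable_const p)).pos_part
  have hgw : Integrable (fun ω => φ' (w ω)) μ := ((integrable_const p).sub hwi).pos_part
  have hψw : Integrable (fun ω => ψ (w ω)) μ := by
    apply (integrable_const (1:ℝ)).mono ((hψm.comp hw).aestronglyMeasurable)
    filter_upwards with ω
    by_cases h : w ω ≤ p <;> simp [hψdef, h]
  have hψ'v : Integrable (fun ω => ψ' (v ω)) μ := by
    apply (integrable_const (1:ℝ)).mono ((hψ'm.comp hv).aestronglyMeasurable)
    filter_upwards with ω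
    by_cases h : p ≤ v ω <;> simp [hψ'def, h]
  have hind1 : IndepFun (fun ω => ψ (w ω)) (fun ω => φ (v ω)) μ :=
    (hindep.symm).comp hψm hφm
  have hind2 : IndepFun (fun ω => ψ' (v ω)) (fun ω => φ' (w ω)) μ :=
    hindep.comp hψ'm hφ'm
  -- integrals of the indicators
  have hiψ : ∫ ω, ψ (w ω) ∂μ = q := by
    have h1 : (fun ω => ψ (w ω)) = Set.indicator {ω | w ω ≤ p} (fun _ => (1:ℝ)) := by
      funext ω; by_cases h : w ω ≤ p <;> simp [hψdef, Set.indicator, h]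
    rw [h1, integral_indicator_const (1:ℝ) hmw]
    simp [hq, Measure.real]
  have hiψ' : ∫ ω, ψ' (v ω) ∂μ = q := by
    have h1 : (fun ω => ψ' (v ω)) = Set.indicator {ω | p ≤ v ω} (fun _ => (1:ℝ)) := by
      funext ω; by_cases h : p ≤ v ω <;> simp [hψ'def, Set.indicator, h]
    rw [h1, integral_indicator_const (1:ℝ) hmv]
    simp [hp, Measure.real]
  set A : ℝ := ∫ ω, φ (v ω) ∂μ with hA
  set B : ℝ := ∫ ω, φ' (w ω) ∂μ with hB
  have hA0 : 0 ≤ A := integral_nonneg fun ω => le_max_right _ _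
  have hB0 : 0 ≤ B := integral_nonneg fun ω => le_max_right _ _
  have him1 : Integrable (fun ω => ψ (w ω) * φ (v ω)) μ := hind1.integrable_mul hψw hfv
  have him2 : Integrable (fun ω => ψ' (v ω) * φ' (w ω)) μ := hind2.integrable_mul hψ'v hgw
  have key1 : ∫ ω, ψ (w ω) * φ (v ω) ∂μ = q * A := by
    have h : ∫ ω, ψ (w ω) * φ (v ω) ∂μ = (∫ ω, ψ (w ω) ∂μ) * ∫ ω, φ (v ω) ∂μ :=
      IndepFun.integral_fun_mul_eq_mul_integral hind1 hψw.aestronglyMeasurable hfv.aestronglyMeasurable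
    rw [hiψ] at h; exact h
  have key2 : ∫ ω, ψ' (v ω) * φ' (w ω) ∂μ = q * B := by
    have h : ∫ ω, ψ' (v ω) * φ' (w ω) ∂μ = (∫ ω, ψ' (v ω) ∂μ) * ∫ ω, φ' (w ω) ∂μ :=
      IndepFun.integral_fun_mul_eq_mul_integral hind2 hψ'v.aestronglyMeasurable hgw.aestronglyMeasurable
    rw [hiψ'] at h; exact h
  -- GFT decomposition
  have hGFT : ∫ ω, (if w ω ≤ p ∧ p ≤ v ω then v ω - w ω else 0) ∂μ = q * (A + B) := by
    have heq : ∀ ω, (if w ω ≤ p ∧ p ≤ v ω then v ω - w ω else 0)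
        = ψ (w ω) * φ (v ω) + ψ' (v ω) * φ' (w ω) := by
      intro ω
      simp only [hψdef, hψ'def, hφdef, hφ'def]
      by_cases h1 : w ω ≤ p <;> by_cases h2 : p ≤ v ω
      · rw [if_pos ⟨h1, h2⟩, if_pos h1, if_pos h2,
          max_eq_left (by linarith : (0:ℝ) ≤ v ω - p),
          max_eq_left (by linarith : (0:ℝ) ≤ p - w ω)]
        ring
      · rw [if_neg (by tauto), if_pos h1, if_neg h2,
          max_eq_right (by linarith : v ω - p ≤ 0)]
        ring
      · rw [if_neg (by tauto), if_neg h1, if_pos h2,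
          max_eq_right (by linarith : p - w ω ≤ 0)]
        ring
      · rw [if_neg (by tauto), if_neg h1, if_neg h2]; ring
    rw [integral_congr_ae (Filter.Eventually.of_forall heq), integral_add him1 him2,
      key1, key2]
    ring
  -- OPT ≤ A + B
  have hOPTle : ∫ ω, (if w ω ≤ v ω then v ω - w ω else 0) ∂μ ≤ A + B := by
    have hle : ∀ ω, (if w ω ≤ v ω then v ω - w ω else 0) ≤ φ (v ω) + φ' (w ω) := by
      intro ω
      have h1 : v ω - p ≤ φ (v ω) := le_max_left _ _
      have h2 : p - w ω ≤ φ' (w ω) := le_max_left _ _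
      have h3 : (0:ℝ) ≤ φ (v ω) := le_max_right _ _
      have h4 : (0:ℝ) ≤ φ' (w ω) := le_max_right _ _
      by_cases h : w ω ≤ v ω
      · rw [if_pos h]; linarith
      · rw [if_neg h]; linarith
    calc ∫ ω, (if w ω ≤ v ω then v ω - w ω else 0) ∂μ
        ≤ ∫ ω, (φ (v ω) + φ' (w ω)) ∂μ := by
          apply integral_mono_of_nonneg
          · filter_upwards with ω
            simp only [Pi.zero_apply]
            show (0:ℝ) ≤ if w ω ≤ v ω then v ω - w ω else 0
            split_ifs with h
            · linarith
            · exact le_refl 0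
          · exact hfv.add hgw
          · exact Filter.Eventually.of_forall hle
      _ = A + B := integral_add hfv hgw
  have hOPT0 : 0 ≤ ∫ ω, (if w ω ≤ v ω then v ω - w ω else 0) ∂μ := by
    apply integral_nonneg; intro ω
    simp only [Pi.zero_apply]
    show (0:ℝ) ≤ if w ω ≤ v ω then v ω - w ω else 0
    split_ifs with h
    · linarith
    · exact le_refl 0
  -- r ≤ 2 q
  have hr2q : r ≤ 2 * q := by
    have hsub : {ω | w ω ≤ v ω} ⊆ {ω | w ω ≤ p} ∪ {ω | p ≤ v ω} := by
      intro ω hω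
      by_cases h : w ω ≤ p
      · exact Or.inl h
      · exact Or.inr (le_trans (le_of_lt (lt_of_not_ge h)) hω)
    have hle := (measure_mono hsub).trans (measure_union_le (μ := μ) {ω | w ω ≤ p} {ω | p ≤ v ω})
    have h2 := ENNReal.toReal_mono
      (ENNReal.add_ne_top.mpr ⟨measure_ne_top μ _, measure_ne_top μ _⟩) hle
    rw [hr]
    calc (μ {ω | w ω ≤ v ω}).toReal
        ≤ (μ {ω | w ω ≤ p} + μ {ω | p ≤ v ω}).toReal := h2
      _ = q + q := by
          rw [ENNReal.toReal_add (measure_ne_top μ _) (measure_ne_top μ _), hp]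
      _ = 2 * q := by ring
  have hr0 : 0 ≤ r := hr ▸ ENNReal.toReal_nonneg
  have hq0 : 0 ≤ q := ENNReal.toReal_nonneg
  have hmain : r * ∫ ω, (if w ω ≤ v ω then v ω - w ω else 0) ∂μ ≤
      2 * ∫ ω, (if w ω ≤ p ∧ p ≤ v ω then v ω - w ω else 0) ∂μ := by
    rw [hGFT]
    calc r * ∫ ω, (if w ω ≤ v ω then v ω - w ω else 0) ∂μ
        ≤ (2 * q) * ∫ ω, (if w ω ≤ v ω then v ω - w ω else 0) ∂μ :=
          mul_le_mul_of_nonneg_right hr2q hOPT0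
      _ ≤ (2 * q) * (A + B) := by
          apply mul_le_mul_of_nonneg_left hOPTle; positivity
      _ = 2 * (q * (A + B)) := by ring
  refine ⟨hmain, fun hrpos => ?_⟩
  rw [div_mul_eq_mul_div, le_div_iff₀ hrpos, mul_comm]
  exact hmain
end

section
/- Let v and w be independent, integrable, nonnegative real-valued random variables on a probability space whose distributions are atomless, and suppose r = P[v ≥ w] > 0. Then there exists a price p ∈ ℝ such that E[(v − w)·1(w ≤ v)] ≤ 4·⌈log₂(2/r)⌉ · E[(v − w)·1(w ≤ p ∧ p ≤ v)], i.e., some fixed price achieves a 4⌈log₂(2/r)⌉-approximation to the optimal gain from trade. -/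
open MeasureTheory ProbabilityTheory

section Helpers

variable {Ω : Type*} [MeasurableSpace Ω] {μ : Measure Ω} [IsProbabilityMeasure μ]
variable {X : Ω → ℝ}

private lemma eps_pos (n : ℕ) : (0:ℝ) < 1 / (n + 1) := by positivity

private lemma eps_anti {m n : ℕ} (h : m ≤ n) : (1:ℝ) / (n + 1) ≤ 1 / (m + 1) := by
  have : (m:ℝ) ≤ (n:ℝ) := Nat.cast_le.2 h
  apply one_div_le_one_div_of_le (by positivity)
  linarith

lemma meas_le_eq_lt (hXa : ∀ x : ℝ, μ {ω | X ω = x} = 0) (t : ℝ) :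
    μ {ω | X ω ≤ t} = μ {ω | X ω < t} := by
  apply le_antisymm
  · have h : {ω | X ω ≤ t} ⊆ {ω | X ω < t} ∪ {ω | X ω = t} := by
      intro ω hω
      have hle : X ω ≤ t := hω
      rcases lt_or_eq_of_le hle with h | h
      · exact Or.inl h
      · exact Or.inr h
    calc μ {ω | X ω ≤ t} ≤ μ ({ω | X ω < t} ∪ {ω | X ω = t}) := measure_mono h
      _ ≤ μ {ω | X ω < t} + μ {ω | X ω = t} := measure_union_le _ _
      _ = μ {ω | X ω < t} := by rw [hXa t, add_zero]
  · refine measure_mono fun ω hω => ?_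
    have hlt : X ω < t := hω
    exact le_of_lt hlt

lemma meas_ge_eq_gt (hXa : ∀ x : ℝ, μ {ω | X ω = x} = 0) (t : ℝ) :
    μ {ω | t ≤ X ω} = μ {ω | t < X ω} := by
  apply le_antisymm
  · have h : {ω | t ≤ X ω} ⊆ {ω | t < X ω} ∪ {ω | X ω = t} := by
      intro ω hω
      have hle : t ≤ X ω := hω
      rcases lt_or_eq_of_le hle with h | h
      · exact Or.inl h
      · exact Or.inr h.symm
    calc μ {ω | t ≤ X ω} ≤ μ ({ω | t < X ω} ∪ {ω | X ω = t}) := measure_mono h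
      _ ≤ μ {ω | t < X ω} + μ {ω | X ω = t} := measure_union_le _ _
      _ = μ {ω | t < X ω} := by rw [hXa t, add_zero]
  · refine measure_mono fun ω hω => ?_
    have hlt : t < X ω := hω
    exact le_of_lt hlt

lemma meas_lt_eq_sup (t : ℝ) :
    μ {ω | X ω < t} = ⨆ n : ℕ, μ {ω | X ω ≤ t - 1 / (n + 1)} := by
  have hU : (⋃ n : ℕ, {ω | X ω ≤ t - 1 / (n + 1)}) = {ω | X ω < t} := by
    ext ω; simp only [Set.mem_iUnion, Set.mem_setOf_eq]
    constructor
    · rintro ⟨n, hn⟩; have := eps_pos n; linarith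
    · intro h
      obtain ⟨n, hn⟩ := exists_nat_one_div_lt (ε := t - X ω) (by linarith)
      exact ⟨n, by push_cast at hn ⊢; linarith⟩
  rw [← hU]
  refine Monotone.measure_iUnion (fun m n h => ?_)
  intro ω hω
  have h1 : X ω ≤ t - 1 / (m + 1) := hω
  have := eps_anti h
  show X ω ≤ t - 1 / (n + 1)
  linarith

lemma meas_gt_eq_sup (t : ℝ) :
    μ {ω | t < X ω} = ⨆ n : ℕ, μ {ω | t + 1 / (n + 1) ≤ X ω} := by
  have hU : (⋃ n : ℕ, {ω | t + 1 / (n + 1) ≤ X ω}) = {ω | t < X ω} := by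
    ext ω; simp only [Set.mem_iUnion, Set.mem_setOf_eq]
    constructor
    · rintro ⟨n, hn⟩; have := eps_pos n; linarith
    · intro h
      obtain ⟨n, hn⟩ := exists_nat_one_div_lt (ε := X ω - t) (by linarith)
      exact ⟨n, by push_cast at hn ⊢; linarith⟩
  rw [← hU]
  refine Monotone.measure_iUnion (fun m n h => ?_)
  intro ω hω
  have h1 : t + 1 / (m + 1) ≤ X ω := hω
  have := eps_anti h
  show t + 1 / (n + 1) ≤ X ω
  linarith

lemma meas_le_eq_inf (hX : Measurable X) (t : ℝ) :
    μ {ω | X ω ≤ t} = ⨅ n : ℕ, μ {ω | X ω ≤ t + 1 / (n + 1)} := by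
  have hI : (⋂ n : ℕ, {ω | X ω ≤ t + 1 / (n + 1)}) = {ω | X ω ≤ t} := by
    ext ω; simp only [Set.mem_iInter, Set.mem_setOf_eq]
    constructor
    · intro h
      by_contra hc; push_neg at hc
      obtain ⟨n, hn⟩ := exists_nat_one_div_lt (ε := X ω - t) (by linarith)
      have := h n; push_cast at hn; linarith
    · intro h n; have := eps_pos n; linarith
  rw [← hI]
  refine Directed.measure_iInter (fun n => (hX measurableSet_Iic).nullMeasurableSet) ?_
    ⟨0, measure_ne_top μ _⟩
  intro m n
  refine ⟨max m n, fun ω hω => ?_, fun ω hω => ?_⟩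
  · have h1 : X ω ≤ t + 1 / (max m n + 1) := hω
    have := eps_anti (le_max_left m n)
    show X ω ≤ t + 1 / (m + 1); linarith
  · have h1 : X ω ≤ t + 1 / (max m n + 1) := hω
    have := eps_anti (le_max_right m n)
    show X ω ≤ t + 1 / (n + 1); linarith

lemma meas_ge_eq_inf (hX : Measurable X) (t : ℝ) :
    μ {ω | t ≤ X ω} = ⨅ n : ℕ, μ {ω | t - 1 / (n + 1) ≤ X ω} := by
  have hI : (⋂ n : ℕ, {ω | t - 1 / (n + 1) ≤ X ω}) = {ω | t ≤ X ω} := by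
    ext ω; simp only [Set.mem_iInter, Set.mem_setOf_eq]
    constructor
    · intro h
      by_contra hc; push_neg at hc
      obtain ⟨n, hn⟩ := exists_nat_one_div_lt (ε := t - X ω) (by linarith)
      have := h n; push_cast at hn; linarith
    · intro h n; have := eps_pos n; linarith
  rw [← hI]
  refine Directed.measure_iInter (fun n => (hX measurableSet_Ici).nullMeasurableSet) ?_
    ⟨0, measure_ne_top μ _⟩
  intro m n
  refine ⟨max m n, fun ω hω => ?_, fun ω hω => ?_⟩
  · have h1 : t - 1 / (max m n + 1) ≤ X ω := hω
    have := eps_anti (le_max_left m n)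
    show t - 1 / (m + 1) ≤ X ω; linarith
  · have h1 : t - 1 / (max m n + 1) ≤ X ω := hω
    have := eps_anti (le_max_right m n)
    show t - 1 / (n + 1) ≤ X ω; linarith

end Helpers

section Quantiles

variable {Ω : Type*} [MeasurableSpace Ω] {μ : Measure Ω} [IsProbabilityMeasure μ]
variable {X v w : Ω → ℝ}

lemma exists_cdf_eq (hX : Measurable X) (hXa : ∀ x : ℝ, μ {ω | X ω = x} = 0)
    (hnn : ∀ ω, 0 ≤ X ω) {q : ℝ} (h0 : 0 < q) (h1 : q < 1) :
    ∃ b : ℝ, μ {ω | X ω ≤ b} = ENNReal.ofReal q := by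
  set S : Set ℝ := {t : ℝ | ENNReal.ofReal q ≤ μ {ω | X ω ≤ t}} with hS
  have hne : S.Nonempty := by
    have hU : (⋃ n : ℕ, {ω | X ω ≤ (n : ℝ)}) = Set.univ := by
      ext ω; simp only [Set.mem_iUnion, Set.mem_setOf_eq, Set.mem_univ, iff_true]
      obtain ⟨n, hn⟩ := exists_nat_gt (X ω)
      exact ⟨n, hn.le⟩
    have hsup : (⨆ n : ℕ, μ {ω | X ω ≤ (n : ℝ)}) = 1 := by
      have hmono : Monotone (fun n : ℕ => {ω | X ω ≤ (n : ℝ)}) := fun m n h =>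
        Set.setOf_subset_setOf.mpr fun ω hω =>
          le_trans hω (by exact_mod_cast Nat.cast_le.2 h)
      rw [← hmono.measure_iUnion, hU, measure_univ]
    have hlt : ENNReal.ofReal q < ⨆ n : ℕ, μ {ω | X ω ≤ (n : ℝ)} := by
      rw [hsup]; exact ENNReal.ofReal_lt_one.2 h1
    obtain ⟨n, hn⟩ := lt_iSup_iff.1 hlt
    exact ⟨(n : ℝ), hn.le⟩
  have hbdd : BddBelow S := by
    refine ⟨0, fun t ht => ?_⟩
    by_contra hlt
    push_neg at hlt
    have hemp : {ω | X ω ≤ t} = (∅ : Set Ω) := by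
      ext ω; simp only [Set.mem_setOf_eq, Set.mem_empty_iff_false, iff_false, not_le]
      exact lt_of_lt_of_le hlt (hnn ω)
    have : ENNReal.ofReal q ≤ 0 := by rw [← measure_empty (μ := μ), ← hemp]; exact ht
    exact absurd this (by simp [ENNReal.ofReal_pos.2 h0, pos_iff_ne_zero.1 (ENNReal.ofReal_pos.2 h0)])
  refine ⟨sInf S, le_antisymm ?_ ?_⟩
  · rw [meas_le_eq_lt hXa, meas_lt_eq_sup]
    refine iSup_le fun n => ?_
    have hnotin : sInf S - 1 / (n + 1) ∉ S := fun hmem =>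
      absurd (csInf_le hbdd hmem) (by linarith [eps_pos n])
    rw [hS] at hnotin
    exact (not_le.1 hnotin).le
  · rw [meas_le_eq_inf hX]
    refine le_iInf fun n => ?_
    obtain ⟨s, hsS, hslt⟩ := (csInf_lt_iff hbdd hne).1
      (show sInf S < sInf S + 1 / (n + 1) by linarith [eps_pos n])
    exact le_trans hsS (measure_mono (Set.setOf_subset_setOf.mpr fun ω h => by linarith))

lemma exists_sf_eq (hX : Measurable X) (hXa : ∀ x : ℝ, μ {ω | X ω = x} = 0)
    (hnn : ∀ ω, 0 ≤ X ω) {q : ℝ} (h0 : 0 < q) (h1 : q < 1) :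
    ∃ a : ℝ, μ {ω | a ≤ X ω} = ENNReal.ofReal q := by
  set S : Set ℝ := {t : ℝ | μ {ω | t ≤ X ω} ≤ ENNReal.ofReal q} with hS
  have hne : S.Nonempty := by
    have hI : (⋂ n : ℕ, {ω | (n : ℝ) ≤ X ω}) = (∅ : Set Ω) := by
      ext ω; simp only [Set.mem_iInter, Set.mem_setOf_eq, Set.mem_empty_iff_false, iff_false,
        not_forall, not_le]
      obtain ⟨n, hn⟩ := exists_nat_gt (X ω)
      exact ⟨n, hn⟩
    have hinf : (⨅ n : ℕ, μ {ω | (n : ℝ) ≤ X ω}) = 0 := by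
      have hdir : Directed (· ⊇ ·) (fun n : ℕ => {ω | (n : ℝ) ≤ X ω}) := by
        intro m n
        exact ⟨max m n, Set.setOf_subset_setOf.mpr (fun ω hω =>
            le_trans (by exact_mod_cast Nat.cast_le.2 (le_max_left m n)) hω),
          Set.setOf_subset_setOf.mpr (fun ω hω =>
            le_trans (by exact_mod_cast Nat.cast_le.2 (le_max_right m n)) hω)⟩
      have hinter := Directed.measure_iInter (μ := μ) (s := fun n : ℕ => {ω | (n : ℝ) ≤ X ω})
        (fun n => (hX measurableSet_Ici).nullMeasurableSet) hdir ⟨0, measure_ne_top μ _⟩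
      rw [← hinter, hI, measure_empty]
    have hlt : (⨅ n : ℕ, μ {ω | (n : ℝ) ≤ X ω}) < ENNReal.ofReal q := by
      rw [hinf]; exact ENNReal.ofReal_pos.2 h0
    obtain ⟨n, hn⟩ := iInf_lt_iff.1 hlt
    exact ⟨(n : ℝ), hn.le⟩
  have hbdd : BddBelow S := by
    refine ⟨0, fun t ht => ?_⟩
    by_contra hlt
    push_neg at hlt
    have huniv : {ω | t ≤ X ω} = (Set.univ : Set Ω) := by
      ext ω; simp only [Set.mem_setOf_eq, Set.mem_univ, iff_true]
      exact le_trans hlt.le (hnn ω)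
    have h1' : (1 : ENNReal) ≤ ENNReal.ofReal q := by
      rw [← measure_univ (μ := μ), ← huniv]; exact ht
    exact absurd (lt_of_lt_of_le (ENNReal.ofReal_lt_one.2 h1) h1') (lt_irrefl _)
  refine ⟨sInf S, le_antisymm ?_ ?_⟩
  · rw [meas_ge_eq_gt hXa, meas_gt_eq_sup]
    refine iSup_le fun n => ?_
    obtain ⟨s, hsS, hslt⟩ := (csInf_lt_iff hbdd hne).1
      (show sInf S < sInf S + 1 / (n + 1) by linarith [eps_pos n])
    exact le_trans (measure_mono (Set.setOf_subset_setOf.mpr fun ω h => by linarith)) hsS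
  · rw [meas_ge_eq_inf hX]
    refine le_iInf fun n => ?_
    have hnotin : sInf S - 1 / (n + 1) ∉ S := fun hmem =>
      absurd (csInf_le hbdd hmem) (by linarith [eps_pos n])
    rw [hS] at hnotin
    exact (not_le.1 hnotin).le

lemma exists_cross (hv : Measurable v) (hw : Measurable w)
    (hva : ∀ x : ℝ, μ {ω | v ω = x} = 0) (hwa : ∀ x : ℝ, μ {ω | w ω = x} = 0)
    (hvnn : ∀ ω, 0 ≤ v ω) (hwnn : ∀ ω, 0 ≤ w ω) :
    ∃ p : ℝ, 0 ≤ p ∧ μ {ω | w ω ≤ p} = μ {ω | p ≤ v ω} := by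
  set S : Set ℝ := {t : ℝ | μ {ω | t ≤ v ω} ≤ μ {ω | w ω ≤ t}} with hS
  have hne : S.Nonempty := by
    obtain ⟨b, hb⟩ := exists_cdf_eq (μ := μ) hw hwa hwnn (q := 1/2) (by norm_num) (by norm_num)
    obtain ⟨a, ha⟩ := exists_sf_eq (μ := μ) hv hva hvnn (q := 1/4) (by norm_num) (by norm_num)
    refine ⟨max a b, ?_⟩
    show μ {ω | max a b ≤ v ω} ≤ μ {ω | w ω ≤ max a b}
    calc μ {ω | max a b ≤ v ω} ≤ μ {ω | a ≤ v ω} :=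
          measure_mono (Set.setOf_subset_setOf.mpr fun ω h => le_trans (le_max_left a b) h)
      _ = ENNReal.ofReal (1/4) := ha
      _ ≤ ENNReal.ofReal (1/2) := ENNReal.ofReal_le_ofReal (by norm_num)
      _ = μ {ω | w ω ≤ b} := hb.symm
      _ ≤ μ {ω | w ω ≤ max a b} :=
          measure_mono (Set.setOf_subset_setOf.mpr fun ω h => le_trans h (le_max_right a b))
  have hlb : ∀ t ∈ S, (0:ℝ) ≤ t := by
    intro t ht
    by_contra hlt
    push_neg at hlt
    have huniv : {ω | t ≤ v ω} = (Set.univ : Set Ω) := by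
      ext ω; simp only [Set.mem_setOf_eq, Set.mem_univ, iff_true]
      exact le_trans hlt.le (hvnn ω)
    have hemp : {ω | w ω ≤ t} = (∅ : Set Ω) := by
      ext ω; simp only [Set.mem_setOf_eq, Set.mem_empty_iff_false, iff_false, not_le]
      exact lt_of_lt_of_le hlt (hwnn ω)
    have h2 := ht
    rw [hS] at h2
    simp only [Set.mem_setOf_eq] at h2
    rw [huniv, hemp, measure_univ, measure_empty] at h2
    exact absurd h2 (by simp)
  have hbdd : BddBelow S := ⟨0, hlb⟩
  set p := sInf S with hp
  have hp0 : 0 ≤ p := le_csInf hne hlb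
  refine ⟨p, hp0, le_antisymm ?_ ?_⟩
  · -- μ {w ≤ p} ≤ μ {p ≤ v}
    rw [meas_le_eq_lt hwa, meas_lt_eq_sup, meas_ge_eq_inf hv]
    refine iSup_le fun m => le_iInf fun n => ?_
    set l := max m n with hl
    have hel1 : (1:ℝ) / (l + 1) ≤ 1 / (m + 1) := eps_anti (le_max_left m n)
    have hel2 : (1:ℝ) / (l + 1) ≤ 1 / (n + 1) := eps_anti (le_max_right m n)
    have hnotin : p - 1 / (l + 1) ∉ S := fun hmem =>
      absurd (csInf_le hbdd hmem) (by linarith [eps_pos l])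
    rw [hS] at hnotin
    simp only [Set.mem_setOf_eq, not_le] at hnotin
    calc μ {ω | w ω ≤ p - 1 / (m + 1)}
        ≤ μ {ω | w ω ≤ p - 1 / (l + 1)} :=
          measure_mono (Set.setOf_subset_setOf.mpr fun ω h => by linarith)
      _ ≤ μ {ω | p - 1 / (l + 1) ≤ v ω} := hnotin.le
      _ ≤ μ {ω | p - 1 / (n + 1) ≤ v ω} :=
          measure_mono (Set.setOf_subset_setOf.mpr fun ω h => by linarith)
  · -- μ {p ≤ v} ≤ μ {w ≤ p}
    rw [meas_ge_eq_gt hva, meas_gt_eq_sup, meas_le_eq_inf hw]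
    refine iSup_le fun m => le_iInf fun n => ?_
    set l := max m n with hl
    have hel1 : (1:ℝ) / (l + 1) ≤ 1 / (m + 1) := eps_anti (le_max_left m n)
    have hel2 : (1:ℝ) / (l + 1) ≤ 1 / (n + 1) := eps_anti (le_max_right m n)
    obtain ⟨s, hsS, hslt⟩ := (csInf_lt_iff hbdd hne).1
      (show sInf S < p + 1 / (l + 1) by rw [← hp]; linarith [eps_pos l])
    rw [hS] at hsS
    simp only [Set.mem_setOf_eq] at hsS
    calc μ {ω | p + 1 / (m + 1) ≤ v ω}
        ≤ μ {ω | p + 1 / (l + 1) ≤ v ω} :=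
          measure_mono (Set.setOf_subset_setOf.mpr fun ω h => by linarith)
      _ ≤ μ {ω | s ≤ v ω} :=
          measure_mono (Set.setOf_subset_setOf.mpr fun ω h => by linarith)
      _ ≤ μ {ω | w ω ≤ s} := hsS
      _ ≤ μ {ω | w ω ≤ p + 1 / (n + 1)} :=
          measure_mono (Set.setOf_subset_setOf.mpr fun ω h => by linarith)

end Quantiles

section Cover

private lemma two_piece (w v c0 c : ℝ) :
    max (v - max w c0) 0 ≤ max (min v c - max w c0) 0 + max (v - max w c) 0 := by
  rcases le_total v c with h | h
  · rw [min_eq_left h]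
    exact le_add_of_nonneg_right (le_max_right _ _)
  · rcases le_total w c with h2 | h2
    · rw [max_eq_right h2, min_eq_right h]
      rcases le_total (v - max w c0) 0 with h3 | h3
      · calc max (v - max w c0) 0 = 0 := max_eq_right h3
          _ ≤ _ := add_nonneg (le_max_right _ _) (le_max_right _ _)
      · rw [max_eq_left h3]
        have hc1 : c - max w c0 ≤ max (c - max w c0) 0 := le_max_left _ _
        have hc2 : v - c ≤ max (v - c) 0 := le_max_left _ _
        linarith
    · rw [max_eq_left h2]
      have h3 : v - max w c0 ≤ v - w := by
        have := le_max_left w c0; linarith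
      calc max (v - max w c0) 0 ≤ max (v - w) 0 := max_le_max h3 le_rfl
        _ ≤ _ := le_add_of_nonneg_left (le_max_right _ _)

private lemma cover_chain (w v : ℝ) (c : ℕ → ℝ) (M : ℕ) :
    max (v - max w (c 0)) 0 ≤
      (∑ i ∈ Finset.range M, max (min v (c (i + 1)) - max w (c i)) 0) +
        max (v - max w (c M)) 0 := by
  induction M with
  | zero => simp
  | succ M ih =>
      rw [Finset.sum_range_succ]
      have := two_piece w v (c M) (c (M + 1))
      linarith

end Cover

set_option maxHeartbeats 2000000 in
theorem stmt2 {Ω : Type*} [MeasurableSpace Ω] (μ : Measure Ω) [IsProbabilityMeasure μ]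
    (v w : Ω → ℝ) (hv : Measurable v) (hw : Measurable w)
    (hvi : Integrable v μ) (hwi : Integrable w μ)
    (hvnn : ∀ ω, 0 ≤ v ω) (hwnn : ∀ ω, 0 ≤ w ω)
    (hva : ∀ x : ℝ, μ {ω | v ω = x} = 0) (hwa : ∀ x : ℝ, μ {ω | w ω = x} = 0)
    (hindep : IndepFun v w μ)
    (r : ℝ) (hr : r = (μ {ω | w ω ≤ v ω}).toReal) (hrpos : 0 < r) :
    ∃ p : ℝ,
      ∫ ω, (if w ω ≤ v ω then v ω - w ω else 0) ∂μ ≤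
        4 * (⌈Real.logb 2 (2 / r)⌉ : ℝ) *
          ∫ ω, (if w ω ≤ p ∧ p ≤ v ω then v ω - w ω else 0) ∂μ := by
  classical
  -- abbreviations
  set F : ℝ → ℝ := fun t => (μ {ω | w ω ≤ t}).toReal with hFdef
  set G : ℝ → ℝ := fun t => (μ {ω | t ≤ v ω}).toReal with hGdef
  set B : ℝ → ℝ := fun p => ∫ ω, max (v ω - p) 0 ∂μ with hBdef
  set S : ℝ → ℝ := fun p => ∫ ω, max (p - w ω) 0 ∂μ with hSdef
  set GFT : ℝ → ℝ := fun p => ∫ ω, (if w ω ≤ p ∧ p ≤ v ω then v ω - w ω else 0) ∂μ with hGFTdef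
  have hmsle : ∀ t : ℝ, MeasurableSet {ω | w ω ≤ t} := fun t => hw measurableSet_Iic
  have hmsge : ∀ t : ℝ, MeasurableSet {ω | t ≤ v ω} := fun t => hv measurableSet_Ici
  have htoReal_mono : ∀ {s t : Set Ω}, s ⊆ t → (μ s).toReal ≤ (μ t).toReal := fun hst =>
    ENNReal.toReal_mono (measure_ne_top μ _) (measure_mono hst)
  have hFmono : ∀ {s t : ℝ}, s ≤ t → F s ≤ F t := fun hst =>
    htoReal_mono (Set.setOf_subset_setOf.mpr fun ω h => le_trans h hst)
  have hGanti : ∀ {s t : ℝ}, s ≤ t → G t ≤ G s := fun hst =>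
    htoReal_mono (Set.setOf_subset_setOf.mpr fun ω h => le_trans hst h)
  have hF0 : ∀ t, 0 ≤ F t := fun t => ENNReal.toReal_nonneg
  have hG0 : ∀ t, 0 ≤ G t := fun t => ENNReal.toReal_nonneg
  have hF1 : ∀ t, F t ≤ 1 := fun t => by
    have := htoReal_mono (Set.subset_univ {ω | w ω ≤ t})
    simpa using this
  have hG1 : ∀ t, G t ≤ 1 := fun t => by
    have := htoReal_mono (Set.subset_univ {ω | t ≤ v ω})
    simpa using this
  have hGzero : G 0 = 1 := by
    have huniv : {ω | (0:ℝ) ≤ v ω} = Set.univ := by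
      ext ω; simpa using hvnn ω
    simp [hGdef, huniv]
  -- integrability
  have hBint : ∀ p : ℝ, Integrable (fun ω => max (v ω - p) 0) μ := fun p =>
    (hvi.sub (integrable_const p)).pos_part
  have hSint : ∀ p : ℝ, Integrable (fun ω => max (p - w ω) 0) μ := fun p =>
    ((integrable_const p).sub hwi).pos_part
  have hB0 : ∀ p, 0 ≤ B p := fun p => integral_nonneg fun ω => le_max_right _ _
  have hS0 : ∀ p, 0 ≤ S p := fun p => integral_nonneg fun ω => le_max_right _ _
  -- indicator integrals
  have hIndV : ∀ s : ℝ, ∫ ω, (if s ≤ v ω then (1:ℝ) else 0) ∂μ = G s := by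
    intro s
    have heq : (fun ω => if s ≤ v ω then (1:ℝ) else 0) =
        Set.indicator {ω | s ≤ v ω} (fun _ => (1:ℝ)) := by
      funext ω; rw [Set.indicator_apply]; rfl
    rw [heq, integral_indicator_const (1:ℝ) (hmsge s)]
    simp [hGdef]; rfl
  have hIndW : ∀ t : ℝ, ∫ ω, (if w ω ≤ t then (1:ℝ) else 0) ∂μ = F t := by
    intro t
    have heq : (fun ω => if w ω ≤ t then (1:ℝ) else 0) =
        Set.indicator {ω | w ω ≤ t} (fun _ => (1:ℝ)) := by
      funext ω; rw [Set.indicator_apply]; rfl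
    rw [heq, integral_indicator_const (1:ℝ) (hmsle t)]
    simp [hFdef]; rfl
  -- measurability of real functions
  have hfmeasV : ∀ s : ℝ, Measurable (fun t : ℝ => if s ≤ t then (1:ℝ) else 0) := by
    intro s
    exact Measurable.ite measurableSet_Ici measurable_const measurable_const
  have hfmeasW : ∀ t : ℝ, Measurable (fun x : ℝ => if x ≤ t then (1:ℝ) else 0) := by
    intro t
    exact Measurable.ite measurableSet_Iic measurable_const measurable_const
  have hgmeasS : ∀ y : ℝ, Measurable (fun x : ℝ => max (y - x) 0) :=
    fun y => (measurable_const.sub measurable_id).max measurable_const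
  have hgmeasB : ∀ y : ℝ, Measurable (fun x : ℝ => max (x - y) 0) :=
    fun y => (measurable_id.sub measurable_const).max measurable_const
  -- independence products
  have hGS : ∀ s t : ℝ, ∫ ω, (if s ≤ v ω then (1:ℝ) else 0) * max (t - w ω) 0 ∂μ = G s * S t := by
    intro s t
    have hcomp : IndepFun ((fun x : ℝ => if s ≤ x then (1:ℝ) else 0) ∘ v)
        ((fun x : ℝ => max (t - x) 0) ∘ w) μ := hindep.comp (hfmeasV s) (hgmeasS t)
    have := hcomp.integral_fun_mul_eq_mul_integral (((hfmeasV s).comp hv).aestronglyMeasurable)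
      (((hgmeasS t).comp hw).aestronglyMeasurable)
    rw [show (∫ ω, (if s ≤ v ω then (1:ℝ) else 0) * max (t - w ω) 0 ∂μ) =
      (∫ ω, ((fun x : ℝ => if s ≤ x then (1:ℝ) else 0) ∘ v) ω *
        ((fun x : ℝ => max (t - x) 0) ∘ w) ω ∂μ) from rfl, this]
    rw [show (integral μ ((fun x : ℝ => if s ≤ x then (1:ℝ) else 0) ∘ v)) =
      ∫ ω, (if s ≤ v ω then (1:ℝ) else 0) ∂μ from rfl]
    rw [show (integral μ ((fun x : ℝ => max (t - x) 0) ∘ w)) =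
      ∫ ω, max (t - w ω) 0 ∂μ from rfl]
    rw [hIndV s]
  have hFB : ∀ s t : ℝ, ∫ ω, max (v ω - s) 0 * (if w ω ≤ t then (1:ℝ) else 0) ∂μ = B s * F t := by
    intro s t
    have hcomp : IndepFun ((fun x : ℝ => max (x - s) 0) ∘ v)
        ((fun x : ℝ => if x ≤ t then (1:ℝ) else 0) ∘ w) μ := hindep.comp (hgmeasB s) (hfmeasW t)
    have := hcomp.integral_fun_mul_eq_mul_integral (((hgmeasB s).comp hv).aestronglyMeasurable)
      (((hfmeasW t).comp hw).aestronglyMeasurable)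
    rw [show (∫ ω, max (v ω - s) 0 * (if w ω ≤ t then (1:ℝ) else 0) ∂μ) =
      (∫ ω, ((fun x : ℝ => max (x - s) 0) ∘ v) ω *
        ((fun x : ℝ => if x ≤ t then (1:ℝ) else 0) ∘ w) ω ∂μ) from rfl, this]
    rw [show (integral μ ((fun x : ℝ => max (x - s) 0) ∘ v)) =
      ∫ ω, max (v ω - s) 0 ∂μ from rfl]
    rw [show (integral μ ((fun x : ℝ => if x ≤ t then (1:ℝ) else 0) ∘ w)) =
      ∫ ω, (if w ω ≤ t then (1:ℝ) else 0) ∂μ from rfl]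
    rw [hIndW t]
  -- integrability of products and slices
  have hprodGS : ∀ s t : ℝ,
      Integrable (fun ω => (if s ≤ v ω then (1:ℝ) else 0) * max (t - w ω) 0) μ := by
    intro s t
    refine Integrable.mono' ((integrable_const |t|).add hwi.abs)
      ((((hfmeasV s).comp hv).mul ((hgmeasS t).comp hw)).aestronglyMeasurable)
      (Filter.Eventually.of_forall fun ω => ?_)
    simp only [Pi.add_apply]
    have h1 : (0:ℝ) ≤ max (t - w ω) 0 := le_max_right _ _
    have h2 : max (t - w ω) 0 ≤ |t| + |w ω| := by
      apply max_le _ (by positivity)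
      have := abs_nonneg (w ω)
      have := le_abs_self t
      have := neg_abs_le (w ω)
      linarith
    by_cases hs : s ≤ v ω
    · rw [Real.norm_eq_abs, if_pos hs, one_mul, abs_of_nonneg h1]; exact h2
    · rw [Real.norm_eq_abs, if_neg hs, zero_mul, abs_zero]; positivity
  have hprodFB : ∀ s t : ℝ,
      Integrable (fun ω => max (v ω - s) 0 * (if w ω ≤ t then (1:ℝ) else 0)) μ := by
    intro s t
    refine Integrable.mono' (hvi.abs.add (integrable_const |s|))
      ((((hgmeasB s).comp hv).mul ((hfmeasW t).comp hw)).aestronglyMeasurable)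
      (Filter.Eventually.of_forall fun ω => ?_)
    simp only [Pi.add_apply]
    have h1 : (0:ℝ) ≤ max (v ω - s) 0 := le_max_right _ _
    have h2 : max (v ω - s) 0 ≤ |v ω| + |s| := by
      apply max_le _ (by positivity)
      have := abs_nonneg (v ω)
      have := le_abs_self (v ω)
      have := neg_abs_le s
      linarith
    by_cases hs : w ω ≤ t
    · rw [Real.norm_eq_abs, if_pos hs, mul_one, abs_of_nonneg h1]; exact h2
    · rw [Real.norm_eq_abs, if_neg hs, mul_zero, abs_zero]; positivity
  have hsliceint : ∀ x y : ℝ,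
      Integrable (fun ω => max (min (v ω) y - max (w ω) x) 0) μ := by
    intro x y
    refine Integrable.mono' ((integrable_const |y|).add hwi.abs)
      ((((hv.min measurable_const).sub (hw.max measurable_const)).max
        measurable_const).aestronglyMeasurable)
      (Filter.Eventually.of_forall fun ω => ?_)
    simp only [Pi.add_apply]
    have h1 : (0:ℝ) ≤ max (min (v ω) y - max (w ω) x) 0 := le_max_right _ _
    rw [Real.norm_eq_abs, abs_of_nonneg h1]
    apply max_le _ (by positivity)
    have ha := min_le_right (v ω) y
    have hb := le_max_left (w ω) x
    have := le_abs_self y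
    have := neg_abs_le (w ω)
    linarith
  have htopint : ∀ x : ℝ, Integrable (fun ω => max (v ω - max (w ω) x) 0) μ := by
    intro x
    refine Integrable.mono' (hvi.abs.add (integrable_const |x|))
      (((hv.sub (hw.max measurable_const)).max measurable_const).aestronglyMeasurable)
      (Filter.Eventually.of_forall fun ω => ?_)
    simp only [Pi.add_apply]
    have h1 : (0:ℝ) ≤ max (v ω - max (w ω) x) 0 := le_max_right _ _
    rw [Real.norm_eq_abs, abs_of_nonneg h1]
    apply max_le _ (by positivity)
    have hb := le_max_right (w ω) x
    have := le_abs_self (v ω)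
    have := neg_abs_le x
    linarith
  have hGFTint : ∀ p : ℝ,
      Integrable (fun ω => if w ω ≤ p ∧ p ≤ v ω then v ω - w ω else 0) μ := by
    intro p
    refine Integrable.mono' (hvi.abs.add hwi.abs)
      (Measurable.aestronglyMeasurable (Measurable.ite
        (((hmsle p).inter (hmsge p)) : MeasurableSet {ω | w ω ≤ p ∧ p ≤ v ω})
        (hv.sub hw) measurable_const))
      (Filter.Eventually.of_forall fun ω => ?_)
    simp only [Pi.add_apply]
    rw [Real.norm_eq_abs]
    by_cases h : w ω ≤ p ∧ p ≤ v ω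
    · rw [if_pos h, abs_le]
      refine ⟨?_, ?_⟩
      · have := neg_abs_le (v ω); have := le_abs_self (w ω); linarith
      · have := le_abs_self (v ω); have := neg_abs_le (w ω); linarith
    · rw [if_neg h, abs_zero]; positivity
  have hoptint : Integrable (fun ω => if w ω ≤ v ω then v ω - w ω else 0) μ := by
    refine Integrable.mono' (hvi.abs.add hwi.abs)
      (Measurable.aestronglyMeasurable (Measurable.ite
        (measurableSet_le hw hv) (hv.sub hw) measurable_const))
      (Filter.Eventually.of_forall fun ω => ?_)
    simp only [Pi.add_apply]
    rw [Real.norm_eq_abs]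
    by_cases h : w ω ≤ v ω
    · rw [if_pos h, abs_le]
      refine ⟨?_, ?_⟩
      · have := neg_abs_le (v ω); have := le_abs_self (w ω); linarith
      · have := le_abs_self (v ω); have := neg_abs_le (w ω); linarith
    · rw [if_neg h, abs_zero]; positivity
  -- GFT decomposition
  have hGFTeq : ∀ p : ℝ, GFT p = B p * F p + G p * S p := by
    intro p
    have hpt : ∀ ω, (if w ω ≤ p ∧ p ≤ v ω then v ω - w ω else 0) =
        max (v ω - p) 0 * (if w ω ≤ p then (1:ℝ) else 0) +
          (if p ≤ v ω then (1:ℝ) else 0) * max (p - w ω) 0 := by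
      intro ω
      by_cases h1 : w ω ≤ p <;> by_cases h2 : p ≤ v ω
      · rw [if_pos ⟨h1, h2⟩, if_pos h1, if_pos h2,
          max_eq_left (by linarith : (0:ℝ) ≤ v ω - p),
          max_eq_left (by linarith : (0:ℝ) ≤ p - w ω)]
        ring
      · rw [if_neg (fun hc : _ ∧ _ => h2 hc.2), if_pos h1, if_neg h2,
          max_eq_right (by linarith : v ω - p ≤ 0)]
        ring
      · rw [if_neg (fun hc : _ ∧ _ => h1 hc.1), if_neg h1, if_pos h2,
          max_eq_right (by linarith : p - w ω ≤ 0)]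
        ring
      · rw [if_neg (fun hc : _ ∧ _ => h1 hc.1), if_neg h1, if_neg h2]
        ring
    rw [hGFTdef]
    simp only [hpt]
    rw [integral_add (hprodFB p p) (hprodGS p p), hFB p p, hGS p p]
  have hGFT_ge_GS : ∀ p, G p * S p ≤ GFT p := by
    intro p
    rw [hGFTeq p]
    nlinarith [hB0 p, hF0 p]
  have hGFT_ge_BF : ∀ p, B p * F p ≤ GFT p := by
    intro p
    rw [hGFTeq p]
    nlinarith [hG0 p, hS0 p]
  -- slice integral bounds
  have hslice_left : ∀ x y : ℝ,
      ∫ ω, max (min (v ω) y - max (w ω) x) 0 ∂μ ≤ G x * S y := by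
    intro x y
    rw [← hGS x y]
    refine integral_mono (hsliceint x y) (hprodGS x y) fun ω => ?_
    by_cases hx : x ≤ v ω
    · simp only [hx, if_true, one_mul]
      apply max_le _ (le_max_right _ _)
      have ha := min_le_right (v ω) y
      have hb := le_max_left (w ω) x
      have : min (v ω) y - max (w ω) x ≤ y - w ω := by linarith
      exact le_trans this (le_max_left _ _)
    · simp only [hx, if_false, zero_mul]
      apply max_le _ le_rfl
      push_neg at hx
      have ha := min_le_left (v ω) y
      have hb := le_max_right (w ω) x
      linarith
  have hslice_right : ∀ x y : ℝ,
      ∫ ω, max (min (v ω) y - max (w ω) x) 0 ∂μ ≤ B x * F y := by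
    intro x y
    rw [← hFB x y]
    refine integral_mono (hsliceint x y) (hprodFB x y) fun ω => ?_
    by_cases hy : w ω ≤ y
    · simp only [hy, if_true, mul_one]
      apply max_le _ (le_max_right _ _)
      have ha := min_le_left (v ω) y
      have hb := le_max_right (w ω) x
      have : min (v ω) y - max (w ω) x ≤ v ω - x := by linarith
      exact le_trans this (le_max_left _ _)
    · simp only [hy, if_false, mul_zero]
      apply max_le _ le_rfl
      push_neg at hy
      have ha := min_le_right (v ω) y
      have hb := le_max_left (w ω) x
      linarith
  have htople : ∀ x : ℝ, ∫ ω, max (v ω - max (w ω) x) 0 ∂μ ≤ B x := by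
    intro x
    refine integral_mono (htopint x) (hBint x) fun ω => ?_
    apply max_le _ (le_max_right _ _)
    have hb := le_max_right (w ω) x
    have : v ω - max (w ω) x ≤ v ω - x := by linarith
    exact le_trans this (le_max_left _ _)
  -- numeric facts
  have hr1 : r ≤ 1 := by
    rw [hr]
    have := htoReal_mono (Set.subset_univ {ω | w ω ≤ v ω})
    simpa using this
  set L : ℤ := ⌈Real.logb 2 (2 / r)⌉ with hLdef
  have h2rpos : (0:ℝ) < 2 / r := by positivity
  have hlogb1 : (1:ℝ) ≤ Real.logb 2 (2 / r) := by
    rw [Real.le_logb_iff_rpow_le (by norm_num : (1:ℝ) < 2) h2rpos]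
    rw [Real.rpow_one, le_div_iff₀ hrpos]
    nlinarith
  have hL1 : 1 ≤ L := by
    have := Int.le_ceil (Real.logb 2 (2 / r))
    have h2 : (1:ℝ) ≤ (L:ℝ) := le_trans hlogb1 this
    exact_mod_cast h2
  set N : ℕ := L.toNat with hNdef
  have hN1 : 1 ≤ N := by omega
  have hNL : ((N:ℕ):ℝ) = (L:ℝ) := by
    rw [hNdef]
    norm_cast
    omega
  have hpowN : ((1:ℝ)/2)^N ≤ r / 2 := by
    have h1 : Real.logb 2 (2 / r) ≤ ((N:ℕ):ℝ) := by
      rw [hNL]; exact Int.le_ceil _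
    have h2 : (2:ℝ) / r ≤ 2 ^ ((N:ℕ):ℝ) :=
      (Real.logb_le_iff_le_rpow (by norm_num : (1:ℝ) < 2) h2rpos).1 h1
    rw [Real.rpow_natCast] at h2
    have h3 : (0:ℝ) < 2 ^ N := by positivity
    rw [div_le_iff₀ hrpos] at h2
    rw [div_pow, one_pow, div_le_div_iff₀ h3 (by norm_num : (0:ℝ) < 2)]
    nlinarith
  -- crossing point
  obtain ⟨pstar, hpstar0, hcrossm⟩ := exists_cross hv hw hva hwa hvnn hwnn (μ := μ)
  set c : ℝ := F pstar with hcdef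
  have hGc : G pstar = c := by rw [hcdef, hFdef, hGdef]; simp only; rw [hcrossm]
  have hc1 : c ≤ 1 := hF1 pstar
  have hc_half : r / 2 ≤ c := by
    have hsub : {ω | w ω ≤ v ω} ⊆ {ω | w ω ≤ pstar} ∪ {ω | pstar ≤ v ω} := by
      intro ω hω
      have hω' : w ω ≤ v ω := hω
      by_cases h : w ω ≤ pstar
      · exact Or.inl h
      · exact Or.inr (le_trans (le_of_not_ge h) hω')
    have h1 : (μ {ω | w ω ≤ v ω}).toReal ≤
        (μ ({ω | w ω ≤ pstar} ∪ {ω | pstar ≤ v ω})).toReal := htoReal_mono hsub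
    have h2 : (μ ({ω | w ω ≤ pstar} ∪ {ω | pstar ≤ v ω})).toReal ≤
        (μ {ω | w ω ≤ pstar}).toReal + (μ {ω | pstar ≤ v ω}).toReal := by
      rw [← ENNReal.toReal_add (measure_ne_top μ _) (measure_ne_top μ _)]
      exact ENNReal.toReal_mono (ENNReal.add_ne_top.2 ⟨measure_ne_top μ _, measure_ne_top μ _⟩)
        (measure_union_le _ _)
    have h3 : F pstar + G pstar = 2 * c := by rw [hGc, hcdef]; ring
    have h4 : r ≤ 2 * c := by
      rw [hr]
      calc (μ {ω | w ω ≤ v ω}).toReal ≤ _ := h1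
        _ ≤ _ := h2
        _ = 2 * c := by rw [← h3]
    linarith
  have hcpos : 0 < c := lt_of_lt_of_le (by linarith) hc_half
  have hcN : ((1:ℝ)/2)^N ≤ c := le_trans hpowN hc_half
  -- quantile existence (toReal versions)
  have hGq : ∀ q : ℝ, 0 < q → q < 1 → ∃ a : ℝ, G a = q := by
    intro q h0 h1
    obtain ⟨a, ha⟩ := exists_sf_eq (μ := μ) hv hva hvnn h0 h1
    exact ⟨a, by rw [hGdef]; simp only; rw [ha, ENNReal.toReal_ofReal h0.le]⟩
  have hFq : ∀ q : ℝ, 0 < q → q < 1 → ∃ b : ℝ, F b = q := by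
    intro q h0 h1
    obtain ⟨b, hb⟩ := exists_cdf_eq (μ := μ) hw hwa hwnn h0 h1
    exact ⟨b, by rw [hFdef]; simp only; rw [hb, ENNReal.toReal_ofReal h0.le]⟩
  -- quantile points
  have hhalfpow_pos : ∀ k : ℕ, (0:ℝ) < (1/2)^k := fun k => by positivity
  have hhalfpow_lt1 : ∀ k : ℕ, k ≠ 0 → ((1:ℝ)/2)^k < 1 := fun k hk =>
    pow_lt_one₀ (by norm_num) (by norm_num) hk
  set a : ℕ → ℝ := fun k =>
    if h : c < (1/2)^k ∧ ((1:ℝ)/2)^k < 1 then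
      Classical.choose (hGq ((1/2)^k) (hhalfpow_pos k) h.2)
    else if k = 0 then 0 else pstar with hadef
  set b : ℕ → ℝ := fun j =>
    if h : c < (1/2)^j ∧ ((1:ℝ)/2)^j < 1 then
      Classical.choose (hFq ((1/2)^j) (hhalfpow_pos j) h.2)
    else pstar with hbdef
  have haG : ∀ k : ℕ, G (a k) = max ((1/2)^k) c := by
    intro k
    rcases Nat.eq_zero_or_pos k with hk | hk
    · subst hk
      have hcond : ¬(c < (1/2)^(0:ℕ) ∧ ((1:ℝ)/2)^(0:ℕ) < 1) := by
        rintro ⟨-, hlt⟩; simp at hlt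
    
      rw [hadef]
      simp only
      rw [dif_neg hcond]
      show G 0 = max ((1/2)^(0:ℕ)) c
      rw [hGzero, pow_zero, max_eq_left hc1]
    · have hk0 : k ≠ 0 := Nat.pos_iff_ne_zero.1 hk
      by_cases hc : c < (1/2)^k
      · have hcond : c < (1/2)^k ∧ ((1:ℝ)/2)^k < 1 := ⟨hc, hhalfpow_lt1 k hk0⟩
        rw [hadef]
        simp only
        rw [dif_pos hcond, Classical.choose_spec (hGq ((1/2)^k) (hhalfpow_pos k) hcond.2),
          max_eq_left hc.le]
      · have hcond : ¬(c < (1/2)^k ∧ ((1:ℝ)/2)^k < 1) := fun h => hc h.1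
        rw [hadef]
        simp only
        rw [dif_neg hcond, if_neg hk0, hGc, max_eq_right (not_lt.1 hc)]
  have hbF : ∀ j : ℕ, j ≠ 0 → F (b j) = max ((1/2)^j) c := by
    intro j hj
    by_cases hc : c < (1/2)^j
    · have hcond : c < (1/2)^j ∧ ((1:ℝ)/2)^j < 1 := ⟨hc, hhalfpow_lt1 j hj⟩
      rw [hbdef]
      simp only
      rw [dif_pos hcond, Classical.choose_spec (hFq ((1/2)^j) (hhalfpow_pos j) hcond.2),
        max_eq_left hc.le]
    · have hcond : ¬(c < (1/2)^j ∧ ((1:ℝ)/2)^j < 1) := fun h => hc h.1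
      rw [hbdef]
      simp only
      rw [dif_neg hcond, ← hcdef, max_eq_right (not_lt.1 hc)]
  have ha_le_pstar : ∀ k : ℕ, a k ≤ pstar := by
    intro k
    by_cases hc : c < (1/2)^k
    · by_contra hlt
      push_neg at hlt
      have := hGanti hlt.le
      rw [haG k, hGc, max_eq_left hc.le] at this
      linarith
    · rw [hadef]
      have hcond : ¬(c < (1/2)^k ∧ ((1:ℝ)/2)^k < 1) := fun h => hc h.1
      simp only
      rw [dif_neg hcond]
      split_ifs <;> [exact hpstar0; exact le_rfl]
  have hpstar_le_b : ∀ j : ℕ, j ≠ 0 → pstar ≤ b j := by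
    intro j hj
    by_cases hc : c < (1/2)^j
    · by_contra hlt
      push_neg at hlt
      have := hFmono hlt.le
      rw [hbF j hj, max_eq_left hc.le, ← hcdef] at this
      linarith
    · rw [hbdef]
      have hcond : ¬(c < (1/2)^j ∧ ((1:ℝ)/2)^j < 1) := fun h => hc h.1
      simp only
      rw [dif_neg hcond]
  have ha_mono : ∀ k : ℕ, a k ≤ a (k+1) := by
    intro k
    by_cases hc : c < (1/2)^(k+1)
    · have hlt : ((1:ℝ)/2)^(k+1) < (1/2)^k :=
        pow_lt_pow_right_of_lt_one₀ (by norm_num) (by norm_num) (Nat.lt_succ_self k)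
      have h1 : G (a (k+1)) < G (a k) := by
        rw [haG k, haG (k+1), max_eq_left hc.le, max_eq_left (by linarith)]
        linarith
      by_contra hcon
      push_neg at hcon
      have := hGanti hcon.le
      linarith
    · have hak1 : a (k+1) = pstar := by
        rw [hadef]
        have hcond : ¬(c < (1/2)^(k+1) ∧ ((1:ℝ)/2)^(k+1) < 1) := fun h => hc h.1
        simp only [hcond, dif_neg, not_false_iff, if_neg (Nat.succ_ne_zero k)]
      rw [hak1]
      exact ha_le_pstar k
  have hb_mono : ∀ j : ℕ, j ≠ 0 → b (j+1) ≤ b j := by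
    intro j hj
    by_cases hc : c < (1/2)^(j+1)
    · have hlt : ((1:ℝ)/2)^(j+1) < (1/2)^j :=
        pow_lt_pow_right_of_lt_one₀ (by norm_num) (by norm_num) (Nat.lt_succ_self j)
      have h1 : F (b (j+1)) < F (b j) := by
        rw [hbF j hj, hbF (j+1) (Nat.succ_ne_zero j), max_eq_left hc.le,
          max_eq_left (by linarith)]
        linarith
      by_contra hcon
      push_neg at hcon
      have := hFmono hcon.le
      linarith
    · have hbj1 : b (j+1) = pstar := by
        rw [hbdef]
        have hcond : ¬(c < (1/2)^(j+1) ∧ ((1:ℝ)/2)^(j+1) < 1) := fun h => hc h.1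
        simp only [hcond, dif_neg, not_false_iff]
      rw [hbj1]
      exact hpstar_le_b j hj
  -- the chain of prices
  set ch : ℕ → ℝ := fun i => if i ≤ N then a i else b (2*N - i) with hchdef
  have ha0 : a 0 = 0 := by
    have hcond : ¬(c < (1/2)^(0:ℕ) ∧ ((1:ℝ)/2)^(0:ℕ) < 1) := by
      rintro ⟨-, hlt⟩; simp at hlt
    rw [hadef]
    simp only
    rw [dif_neg hcond]
    simp
  have haN : a N = pstar := by
    have hcond : ¬(c < (1/2)^N ∧ ((1:ℝ)/2)^N < 1) := fun h => absurd hcN (not_le.2 h.1)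
    rw [hadef]
    simp only
    rw [dif_neg hcond, if_neg (by omega : ¬ N = 0)]
  have hch0 : ch 0 = 0 := by
    rw [hchdef]
    simp only
    rw [if_pos (Nat.zero_le N)]
    exact ha0
  have hchG : ∀ i : ℕ, i ≤ N → G (ch i) = max ((1/2)^i) c := by
    intro i hi
    rw [hchdef]
    simp only
    rw [if_pos hi]
    exact haG i
  have hchF : ∀ i : ℕ, N ≤ i → i ≤ 2*N - 1 → F (ch i) = max ((1/2)^(2*N - i)) c := by
    intro i hiN hi2
    rcases eq_or_lt_of_le hiN with heq | hlt
    · have hie : i = N := heq.symm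
      subst hie
      rw [hchdef]
      simp only
      rw [if_pos le_rfl, haN, ← hcdef]
      have h2NN : 2*N - N = N := by omega
      rw [h2NN, max_eq_right hcN]
    · rw [hchdef]
      simp only
      rw [if_neg (by omega : ¬ i ≤ N)]
      exact hbF (2*N - i) (by omega)
  have hmax2 : ∀ x y : ℝ, 0 ≤ y → max (2*x) y ≤ 2 * max x y := by
    intro x y hy
    apply max_le
    · nlinarith [le_max_left x y, le_max_right x y]
    · nlinarith [le_max_right x y]
  -- per-slice bounds
  have hsliceL : ∀ i : ℕ, i < N →
      ∫ ω, max (min (v ω) (ch (i+1)) - max (w ω) (ch i)) 0 ∂μ ≤ 2 * GFT (ch (i+1)) := by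
    intro i hi
    have h1 := hslice_left (ch i) (ch (i+1))
    have hGi : G (ch i) = max ((1/2)^i) c := hchG i hi.le
    have hGi1 : G (ch (i+1)) = max ((1/2)^(i+1)) c := hchG (i+1) (Nat.succ_le_of_lt hi)
    have h2 : G (ch i) ≤ 2 * G (ch (i+1)) := by
      rw [hGi, hGi1]
      have hpow : ((1:ℝ)/2)^i = 2 * (1/2)^(i+1) := by rw [pow_succ]; ring
      rw [hpow]
      exact hmax2 _ _ hcpos.le
    calc ∫ ω, max (min (v ω) (ch (i+1)) - max (w ω) (ch i)) 0 ∂μ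
        ≤ G (ch i) * S (ch (i+1)) := h1
      _ ≤ (2 * G (ch (i+1))) * S (ch (i+1)) := mul_le_mul_of_nonneg_right h2 (hS0 _)
      _ = 2 * (G (ch (i+1)) * S (ch (i+1))) := by ring
      _ ≤ 2 * GFT (ch (i+1)) := by linarith [hGFT_ge_GS (ch (i+1))]
  have hsliceR : ∀ i : ℕ, N ≤ i → i + 1 ≤ 2*N - 1 →
      ∫ ω, max (min (v ω) (ch (i+1)) - max (w ω) (ch i)) 0 ∂μ ≤ 2 * GFT (ch i) := by
    intro i hiN hi2
    have h1 := hslice_right (ch i) (ch (i+1))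
    have hFi : F (ch i) = max ((1/2)^(2*N - i)) c := hchF i hiN (by omega)
    have hFi1 : F (ch (i+1)) = max ((1/2)^(2*N - (i+1))) c := hchF (i+1) (by omega) hi2
    have h2 : F (ch (i+1)) ≤ 2 * F (ch i) := by
      rw [hFi, hFi1]
      have hexp : 2*N - i = (2*N - (i+1)) + 1 := by omega
      rw [hexp]
      have hpow : ((1:ℝ)/2)^(2*N - (i+1)) = 2 * (1/2)^((2*N - (i+1)) + 1) := by
        rw [pow_succ]; ring
      rw [hpow]
      exact hmax2 _ _ hcpos.le
    calc ∫ ω, max (min (v ω) (ch (i+1)) - max (w ω) (ch i)) 0 ∂μ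
        ≤ B (ch i) * F (ch (i+1)) := h1
      _ ≤ B (ch i) * (2 * F (ch i)) := mul_le_mul_of_nonneg_left h2 (hB0 _)
      _ = 2 * (B (ch i) * F (ch i)) := by ring
      _ ≤ 2 * GFT (ch i) := by linarith [hGFT_ge_BF (ch i)]
  have hFtop : (1/2:ℝ) ≤ F (ch (2*N - 1)) := by
    have h1 := hchF (2*N - 1) (by omega) le_rfl
    rw [h1]
    have h21 : 2*N - (2*N - 1) = 1 := by omega
    rw [h21, pow_one]
    exact le_max_left _ _
  have htopb : ∫ ω, max (v ω - max (w ω) (ch (2*N - 1))) 0 ∂μ ≤ 2 * GFT (ch (2*N - 1)) := by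
    calc ∫ ω, max (v ω - max (w ω) (ch (2*N - 1))) 0 ∂μ
        ≤ B (ch (2*N - 1)) := htople _
      _ ≤ 2 * (B (ch (2*N - 1)) * F (ch (2*N - 1))) := by
          nlinarith [hB0 (ch (2*N - 1)), hFtop]
      _ ≤ 2 * GFT (ch (2*N - 1)) := by linarith [hGFT_ge_BF (ch (2*N - 1))]
  -- pointwise covering
  have hcover : ∀ ω, (if w ω ≤ v ω then v ω - w ω else 0) ≤
      (∑ i ∈ Finset.range (2*N - 1), max (min (v ω) (ch (i+1)) - max (w ω) (ch i)) 0) +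
        max (v ω - max (w ω) (ch (2*N - 1))) 0 := by
    intro ω
    by_cases h : w ω ≤ v ω
    · rw [if_pos h]
      have hcc := cover_chain (w ω) (v ω) ch (2*N - 1)
      rw [hch0, max_eq_left (hwnn ω), max_eq_left (by linarith : (0:ℝ) ≤ v ω - w ω)] at hcc
      exact hcc
    · rw [if_neg h]
      exact add_nonneg (Finset.sum_nonneg fun i _ => le_max_right _ _) (le_max_right _ _)
  -- integrate
  have hsumint : Integrable (fun ω =>
      ∑ i ∈ Finset.range (2*N - 1), max (min (v ω) (ch (i+1)) - max (w ω) (ch i)) 0) μ :=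
    integrable_finset_sum _ (fun i _ => hsliceint (ch i) (ch (i+1)))
  have hOPT : ∫ ω, (if w ω ≤ v ω then v ω - w ω else 0) ∂μ ≤
      (∑ i ∈ Finset.range (2*N - 1),
        ∫ ω, max (min (v ω) (ch (i+1)) - max (w ω) (ch i)) 0 ∂μ) +
        ∫ ω, max (v ω - max (w ω) (ch (2*N - 1))) 0 ∂μ := by
    have hRHSint : Integrable (fun ω =>
        (∑ i ∈ Finset.range (2*N - 1), max (min (v ω) (ch (i+1)) - max (w ω) (ch i)) 0) +
          max (v ω - max (w ω) (ch (2*N - 1))) 0) μ := hsumint.add (htopint (ch (2*N - 1)))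
    have h1 := integral_mono hoptint hRHSint hcover
    rw [integral_add hsumint (htopint (ch (2*N - 1))),
      integral_finset_sum (Finset.range (2*N - 1))
        (fun i _ => hsliceint (ch i) (ch (i+1)))] at h1
    exact h1
  -- bound the sum by GFT at finitely many prices
  set d : ℕ → ℝ := fun i => if i < N then ch (i+1) else ch i with hddef
  have htotal : (∑ i ∈ Finset.range (2*N - 1),
      ∫ ω, max (min (v ω) (ch (i+1)) - max (w ω) (ch i)) 0 ∂μ) +
        ∫ ω, max (v ω - max (w ω) (ch (2*N - 1))) 0 ∂μ ≤
      ∑ i ∈ Finset.range (2*N), 2 * GFT (d i) := by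
    have h2N : 2*N = (2*N - 1) + 1 := by omega
    rw [h2N, Finset.sum_range_succ]
    apply add_le_add
    · apply Finset.sum_le_sum
      intro i hi
      rw [Finset.mem_range] at hi
      by_cases hiN : i < N
      · have hd : d i = ch (i+1) := by rw [hddef]; simp only; rw [if_pos hiN]
        rw [hd]
        exact hsliceL i hiN
      · have hd : d i = ch i := by rw [hddef]; simp only; rw [if_neg hiN]
        rw [hd]
        exact hsliceR i (le_of_not_gt hiN) (by omega)
    · have hd : d (2*N - 1) = ch (2*N - 1) := by
        rw [hddef]; simp only; rw [if_neg (by omega : ¬ 2*N - 1 < N)]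
      rw [hd]
      exact htopb
  obtain ⟨i0, hi0mem, hi0max⟩ := Finset.exists_max_image (Finset.range (2*N))
    (fun i => GFT (d i)) ⟨0, Finset.mem_range.2 (by omega)⟩
  have hsum_le : ∑ i ∈ Finset.range (2*N), 2 * GFT (d i) ≤
      ((2*N : ℕ) : ℝ) * (2 * GFT (d i0)) := by
    calc ∑ i ∈ Finset.range (2*N), 2 * GFT (d i)
        ≤ ∑ _i ∈ Finset.range (2*N), 2 * GFT (d i0) :=
          Finset.sum_le_sum (fun i hi => by have := hi0max i hi; linarith)
      _ = ((2*N : ℕ) : ℝ) * (2 * GFT (d i0)) := by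
          rw [Finset.sum_const, Finset.card_range, nsmul_eq_mul]
  refine ⟨d i0, ?_⟩
  have hfinal : ∫ ω, (if w ω ≤ v ω then v ω - w ω else 0) ∂μ ≤
      4 * ((N : ℕ) : ℝ) * GFT (d i0) := by
    calc ∫ ω, (if w ω ≤ v ω then v ω - w ω else 0) ∂μ
        ≤ _ := hOPT
      _ ≤ _ := htotal
      _ ≤ ((2*N : ℕ) : ℝ) * (2 * GFT (d i0)) := hsum_le
      _ = 4 * ((N : ℕ) : ℝ) * GFT (d i0) := by push_cast; ring
  rw [hNL] at hfinal
  exact hfinal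
end

section
/- Let v and w be independent, integrable, real-valued random variables on a probability space, and let p be a real number with P[v ≥ p] ≥ 1/2 and P[w ≤ p] ≥ 1/2 (i.e., p lies between the seller's median and the buyer's median). Then E[(v − w)·1(w ≤ v)] ≤ 2 · E[(v − w)·1(w ≤ p ∧ p ≤ v)], i.e., the fixed price p achieves a 2-approximation to the optimal gain from trade. -/
open MeasureTheory ProbabilityTheory

theorem stmt3 {Ω : Type*} [MeasurableSpace Ω] (μ : Measure Ω) [IsProbabilityMeasure μ]
    (v w : Ω → ℝ) (hv : Measurable v) (hw : Measurable w)
    (hvi : Integrable v μ) (hwi : Integrable w μ)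
    (hindep : IndepFun v w μ) (p : ℝ)
    (hpB : (1 : ℝ) / 2 ≤ (μ {ω | p ≤ v ω}).toReal)
    (hpS : (1 : ℝ) / 2 ≤ (μ {ω | w ω ≤ p}).toReal) :
    ∫ ω, (if w ω ≤ v ω then v ω - w ω else 0) ∂μ ≤
      2 * ∫ ω, (if w ω ≤ p ∧ p ≤ v ω then v ω - w ω else 0) ∂μ := by
  classical
  set F : ℝ → ℝ := fun x => if p ≤ x then x - p else 0 with hF
  set G : ℝ → ℝ := fun x => if x ≤ p then p - x else 0 with hG
  set Fi : ℝ → ℝ := fun x => if p ≤ x then 1 else 0 with hFi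
  set Gi : ℝ → ℝ := fun x => if x ≤ p then 1 else 0 with hGi
  have hFm : Measurable F :=
    Measurable.ite (measurableSet_le measurable_const measurable_id)
      (measurable_id.sub_const p) measurable_const
  have hGm : Measurable G :=
    Measurable.ite (measurableSet_le measurable_id measurable_const)
      (measurable_const.sub measurable_id) measurable_const
  have hFim : Measurable Fi :=
    Measurable.ite (measurableSet_le measurable_const measurable_id)
      measurable_const measurable_const
  have hGim : Measurable Gi :=
    Measurable.ite (measurableSet_le measurable_id measurable_const)
      measurable_const measurable_const
  -- integrability of F ∘ v and G ∘ w
  have hFv : Integrable (fun ω => F (v ω)) μ := by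
    have : Integrable (fun ω => max (v ω - p) 0) μ :=
      (hvi.sub (integrable_const p)).pos_part
    refine this.congr (Filter.Eventually.of_forall fun ω => ?_)
    by_cases h : p ≤ v ω
    · simp [hF, h, max_eq_left, sub_nonneg.2 h]
    · simp [hF, h, max_eq_right, sub_nonpos.2 (le_of_not_ge h)]
  have hGw : Integrable (fun ω => G (w ω)) μ := by
    have : Integrable (fun ω => max (p - w ω) 0) μ :=
      ((integrable_const p).sub hwi).pos_part
    refine this.congr (Filter.Eventually.of_forall fun ω => ?_)
    by_cases h : w ω ≤ p
    · simp [hG, h, max_eq_left, sub_nonneg.2 h]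
    · simp [hG, h, max_eq_right, sub_nonpos.2 (le_of_not_ge h)]
  have hFiv : Integrable (fun ω => Fi (v ω)) μ := by
    have : (fun ω => Fi (v ω)) = Set.indicator {ω | p ≤ v ω} (fun _ => (1:ℝ)) := by
      funext ω
      by_cases h : p ≤ v ω <;> simp [hFi, h, Set.indicator_apply]
    rw [this]
    exact (integrable_const (1:ℝ)).indicator (measurableSet_le measurable_const hv)
  have hGiw : Integrable (fun ω => Gi (w ω)) μ := by
    have : (fun ω => Gi (w ω)) = Set.indicator {ω | w ω ≤ p} (fun _ => (1:ℝ)) := by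
      funext ω
      by_cases h : w ω ≤ p <;> simp [hGi, h, Set.indicator_apply]
    rw [this]
    exact (integrable_const (1:ℝ)).indicator (measurableSet_le hw measurable_const)
  -- values of indicator integrals
  have hIGi : ∫ ω, Gi (w ω) ∂μ = (μ {ω | w ω ≤ p}).toReal := by
    have h1 : (fun ω => Gi (w ω)) = Set.indicator {ω | w ω ≤ p} (fun _ => (1:ℝ)) := by
      funext ω
      by_cases h : w ω ≤ p <;> simp [hGi, h, Set.indicator_apply]
    rw [h1, integral_indicator_const (1:ℝ) (measurableSet_le hw measurable_const)]
    simp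
    rfl
  have hIFi : ∫ ω, Fi (v ω) ∂μ = (μ {ω | p ≤ v ω}).toReal := by
    have h1 : (fun ω => Fi (v ω)) = Set.indicator {ω | p ≤ v ω} (fun _ => (1:ℝ)) := by
      funext ω
      by_cases h : p ≤ v ω <;> simp [hFi, h, Set.indicator_apply]
    rw [h1, integral_indicator_const (1:ℝ) (measurableSet_le measurable_const hv)]
    simp
    rfl
  set A := ∫ ω, F (v ω) ∂μ with hA
  set B := ∫ ω, G (w ω) ∂μ with hB
  have hAnn : 0 ≤ A := by
    refine integral_nonneg fun ω => ?_
    by_cases h : p ≤ v ω <;> simp [hF, h, sub_nonneg.2]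
  have hBnn : 0 ≤ B := by
    refine integral_nonneg fun ω => ?_
    by_cases h : w ω ≤ p <;> simp [hG, h, sub_nonneg.2]
  -- OPT ≤ A + B
  have hOPT : ∫ ω, (if w ω ≤ v ω then v ω - w ω else 0) ∂μ ≤ A + B := by
    have hInt : Integrable (fun ω => if w ω ≤ v ω then v ω - w ω else 0) μ := by
      refine (Integrable.mono (hvi.sub hwi) ?_ ?_)
      · exact ((hv.sub hw).ite (measurableSet_le hw hv) measurable_const).aestronglyMeasurable
      · refine Filter.Eventually.of_forall fun ω => ?_
        by_cases h : w ω ≤ v ω <;> simp [h, Real.norm_eq_abs, abs_nonneg, le_abs_self]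
    rw [hA, hB, ← integral_add hFv hGw]
    refine integral_mono hInt (hFv.add hGw) fun ω => ?_
    by_cases h : w ω ≤ v ω
    · simp only [h, if_true]
      have h1 : v ω - p ≤ F (v ω) := by
        by_cases hp : p ≤ v ω
        · simp [hF, hp]
        · simp only [hF, hp, if_false]; linarith [le_of_not_ge hp]
      have h2 : p - w ω ≤ G (w ω) := by
        by_cases hp : w ω ≤ p
        · simp [hG, hp]
        · simp only [hG, hp, if_false]; linarith [le_of_not_ge hp]
      have := add_le_add h1 h2
      linarith
    · simp only [h, if_false]
      have h1 : 0 ≤ F (v ω) := by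
        by_cases hp : p ≤ v ω
        · simp only [hF, hp, if_true]; linarith
        · simp [hF, hp]
      have h2 : 0 ≤ G (w ω) := by
        by_cases hp : w ω ≤ p
        · simp only [hG, hp, if_true]; linarith
        · simp [hG, hp]
      linarith
  -- GFT = A * P(w ≤ p) + B * P(p ≤ v)
  have hPoint : ∀ ω, (if w ω ≤ p ∧ p ≤ v ω then v ω - w ω else 0)
      = F (v ω) * Gi (w ω) + Fi (v ω) * G (w ω) := by
    intro ω
    by_cases h1 : w ω ≤ p <;> by_cases h2 : p ≤ v ω <;>
      simp [hF, hG, hFi, hGi, h1, h2]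
  have hind1 : IndepFun (fun ω => F (v ω)) (fun ω => Gi (w ω)) μ :=
    hindep.comp hFm hGim
  have hind2 : IndepFun (fun ω => Fi (v ω)) (fun ω => G (w ω)) μ :=
    hindep.comp hFim hGm
  have hGFT : ∫ ω, (if w ω ≤ p ∧ p ≤ v ω then v ω - w ω else 0) ∂μ
      = A * (μ {ω | w ω ≤ p}).toReal + B * (μ {ω | p ≤ v ω}).toReal := by
    have e1 : ∫ ω, F (v ω) * Gi (w ω) ∂μ = A * (μ {ω | w ω ≤ p}).toReal := by
      rw [hind1.integral_fun_mul_eq_mul_integral hFv.aestronglyMeasurable hGiw.aestronglyMeasurable, hIGi]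
    have e2 : ∫ ω, Fi (v ω) * G (w ω) ∂μ = (μ {ω | p ≤ v ω}).toReal * B := by
      rw [hind2.integral_fun_mul_eq_mul_integral hFiv.aestronglyMeasurable hGw.aestronglyMeasurable, hIFi]
    have hi1 : Integrable (fun ω => F (v ω) * Gi (w ω)) μ :=
      hind1.integrable_mul hFv hGiw
    have hi2 : Integrable (fun ω => Fi (v ω) * G (w ω)) μ :=
      hind2.integrable_mul hFiv hGw
    calc ∫ ω, (if w ω ≤ p ∧ p ≤ v ω then v ω - w ω else 0) ∂μ
        = ∫ ω, (F (v ω) * Gi (w ω) + Fi (v ω) * G (w ω)) ∂μ := by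
          exact integral_congr_ae (Filter.Eventually.of_forall hPoint)
      _ = (∫ ω, F (v ω) * Gi (w ω) ∂μ) + ∫ ω, Fi (v ω) * G (w ω) ∂μ :=
          integral_add hi1 hi2
      _ = A * (μ {ω | w ω ≤ p}).toReal + B * (μ {ω | p ≤ v ω}).toReal := by
          rw [e1, e2]; ring
  rw [hGFT]
  nlinarith [hOPT, hAnn, hBnn, hpB, hpS]
end

section
/- Let v and w be independent, integrable, real-valued random variables on a probability space, let p be a real number, and let q = min(P[v ≥ p], P[w ≤ p]). Then q · E[(v − w)·1(w ≤ v ∧ v < p)] ≤ (1 − q) · E[(p − w)·1(w ≤ p ∧ p ≤ v)]. -/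
open MeasureTheory ProbabilityTheory

theorem stmt6 {Ω : Type*} [MeasurableSpace Ω] (μ : Measure Ω) [IsProbabilityMeasure μ]
    (v w : Ω → ℝ) (hv : Measurable v) (hw : Measurable w)
    (hvi : Integrable v μ) (hwi : Integrable w μ)
    (hindep : IndepFun v w μ) (p : ℝ) (q : ℝ)
    (hq : q = min (μ {ω | p ≤ v ω}).toReal (μ {ω | w ω ≤ p}).toReal) :
    q * ∫ ω, (if w ω ≤ v ω ∧ v ω < p then v ω - w ω else 0) ∂μ ≤
      (1 - q) * ∫ ω, (if w ω ≤ p ∧ p ≤ v ω then p - w ω else 0) ∂μ := by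
  set a : ℝ := (μ {ω | p ≤ v ω}).toReal with ha
  set b : ℝ := (μ {ω | w ω ≤ p}).toReal with hb
  -- basic functions
  set ψ : ℝ → ℝ := fun x => if x ≤ p then p - x else 0 with hψdef
  set φ : ℝ → ℝ := fun x => if p ≤ x then (1:ℝ) else 0 with hφdef
  set φ' : ℝ → ℝ := fun x => if x < p then (1:ℝ) else 0 with hφ'def
  have hψm : Measurable ψ :=
    Measurable.ite (measurableSet_le measurable_id measurable_const)
      (measurable_const.sub measurable_id) measurable_const
  have hφm : Measurable φ := by
    apply Measurable.ite (measurableSet_le measurable_const measurable_id) <;> measurability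
  have hφ'm : Measurable φ' := by
    apply Measurable.ite (measurableSet_lt measurable_id measurable_const) <;> measurability
  -- integrability
  have hψi : Integrable (ψ ∘ w) μ := by
    refine Integrable.mono' ((integrable_const p).sub hwi).abs
      ((hψm.comp hw).aestronglyMeasurable) (Filter.Eventually.of_forall fun ω => ?_)
    simp only [Function.comp, hψdef, Pi.abs_apply, Pi.sub_apply]
    split <;> simp [Real.norm_eq_abs, abs_nonneg, le_abs_self]
  have hφi : Integrable (φ ∘ v) μ := by
    refine Integrable.mono' (integrable_const (1:ℝ))
      ((hφm.comp hv).aestronglyMeasurable) (Filter.Eventually.of_forall fun ω => ?_)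
    simp only [Function.comp, hφdef]
    split <;> simp
  have hφ'i : Integrable (φ' ∘ v) μ := by
    refine Integrable.mono' (integrable_const (1:ℝ))
      ((hφ'm.comp hv).aestronglyMeasurable) (Filter.Eventually.of_forall fun ω => ?_)
    simp only [Function.comp, hφ'def]
    split <;> simp
  -- independence of composed functions
  have hind1 : IndepFun (φ ∘ v) (ψ ∘ w) μ := hindep.comp hφm hψm
  have hind2 : IndepFun (φ' ∘ v) (ψ ∘ w) μ := hindep.comp hφ'm hψm
  -- integrals of indicators
  have hφint : ∫ ω, (φ ∘ v) ω ∂μ = a := by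
    have : (φ ∘ v) = Set.indicator {ω | p ≤ v ω} (fun _ => (1:ℝ)) := by
      ext ω; simp [Set.indicator, hφdef, Function.comp]
    rw [this, integral_indicator_const _ (measurableSet_le measurable_const hv)]
    simp [ha, measureReal_def]
  have hφ'int : ∫ ω, (φ' ∘ v) ω ∂μ = 1 - a := by
    have : (φ' ∘ v) = Set.indicator {ω | p ≤ v ω}ᶜ (fun _ => (1:ℝ)) := by
      ext ω; simp [Set.indicator, hφ'def, Function.comp, not_le]
    rw [this, integral_indicator_const _ (measurableSet_le measurable_const hv).compl, measureReal_def]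
    rw [prob_compl_eq_one_sub (measurableSet_le measurable_const hv)]
    rw [ENNReal.toReal_sub_of_le prob_le_one ENNReal.one_ne_top]
    simp [ha]
  -- C = ∫ ψ ∘ w, nonnegative
  set C : ℝ := ∫ ω, (ψ ∘ w) ω ∂μ with hC
  have hCnonneg : 0 ≤ C := by
    apply integral_nonneg
    intro ω; simp only [Function.comp, hψdef]; split <;> simp_all [sub_nonneg]
  -- Step 2: RHS integral equals a * C
  have hRHS : ∫ ω, (if w ω ≤ p ∧ p ≤ v ω then p - w ω else 0) ∂μ = a * C := by
    have heq : (fun ω => if w ω ≤ p ∧ p ≤ v ω then p - w ω else 0)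
        = (φ ∘ v) * (ψ ∘ w) := by
      ext ω
      simp only [Pi.mul_apply, Function.comp, hφdef, hψdef]
      by_cases h1 : w ω ≤ p <;> by_cases h2 : p ≤ v ω <;> simp [h1, h2]
    rw [heq, hind1.integral_mul_eq_mul_integral hφi.aestronglyMeasurable hψi.aestronglyMeasurable, hφint]
  -- Step 1: LHS integral ≤ (1-a) * C
  have hLHSint : Integrable (fun ω => if w ω ≤ v ω ∧ v ω < p then v ω - w ω else 0) μ := by
    refine Integrable.mono' (hvi.abs.add hwi.abs) ?_ (Filter.Eventually.of_forall fun ω => ?_)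
    · apply Measurable.aestronglyMeasurable
      apply Measurable.ite _ (hv.sub hw) measurable_const
      exact (measurableSet_le hw hv).inter (measurableSet_lt hv measurable_const)
    · simp only [Pi.add_apply, Pi.abs_apply]
      split
      · exact (abs_sub _ _).trans (by simp [abs_sub_comm])
      · simp [abs_nonneg, add_nonneg]
  have hprodi : Integrable ((φ' ∘ v) * (ψ ∘ w)) μ := by
    refine Integrable.mono' ((integrable_const p).sub hwi).abs
      (((hφ'm.comp hv).mul (hψm.comp hw)).aestronglyMeasurable)
      (Filter.Eventually.of_forall fun ω => ?_)
    simp only [Pi.mul_apply, Function.comp, hφ'def, hψdef, Pi.abs_apply, Pi.sub_apply]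
    split <;> split <;> simp [Real.norm_eq_abs, abs_nonneg, le_abs_self, abs_mul]
  have hLHS : ∫ ω, (if w ω ≤ v ω ∧ v ω < p then v ω - w ω else 0) ∂μ ≤ (1 - a) * C := by
    have hle : ∀ ω, (if w ω ≤ v ω ∧ v ω < p then v ω - w ω else 0)
        ≤ ((φ' ∘ v) * (ψ ∘ w)) ω := by
      intro ω
      simp only [Pi.mul_apply, Function.comp, hφ'def, hψdef]
      by_cases h1 : w ω ≤ v ω ∧ v ω < p
      · have hwp : w ω ≤ p := h1.1.trans h1.2.le
        rw [if_pos h1, if_pos h1.2, if_pos hwp, one_mul]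
        linarith [h1.2]
      · rw [if_neg h1]
        apply mul_nonneg
        · split <;> norm_num
        · split
          next h => linarith
          next => exact le_refl 0
    calc ∫ ω, (if w ω ≤ v ω ∧ v ω < p then v ω - w ω else 0) ∂μ
        ≤ ∫ ω, ((φ' ∘ v) * (ψ ∘ w)) ω ∂μ := integral_mono hLHSint hprodi hle
      _ = (1 - a) * C := by rw [hind2.integral_mul_eq_mul_integral hφ'i.aestronglyMeasurable hψi.aestronglyMeasurable, hφ'int]
  -- final arithmetic
  have hqa : q ≤ a := hq ▸ min_le_left _ _
  have hq0 : 0 ≤ q := hq ▸ le_min ENNReal.toReal_nonneg ENNReal.toReal_nonneg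
  have ha1 : a ≤ 1 := by
    rw [ha]
    exact ENNReal.toReal_le_of_le_ofReal one_pos.le (by simpa using prob_le_one)
  have hq1 : q ≤ 1 := hqa.trans ha1
  have hLnonneg : 0 ≤ ∫ ω, (if w ω ≤ v ω ∧ v ω < p then v ω - w ω else 0) ∂μ := by
    apply integral_nonneg
    intro ω
    simp only [Pi.zero_apply]
    split
    next h => linarith [h.1, h.2]
    next => exact le_refl 0
  rw [hRHS]
  calc q * ∫ ω, (if w ω ≤ v ω ∧ v ω < p then v ω - w ω else 0) ∂μ
      ≤ q * ((1 - a) * C) := by nlinarith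
    _ ≤ (1 - q) * (a * C) := by nlinarith [(a - q) * C, mul_nonneg (sub_nonneg.mpr hqa) hCnonneg]
end

section
/- Let v and w be independent, integrable, real-valued random variables on a probability space, let p be a real number, and let q = min(P[v ≥ p], P[w ≤ p]). Then q · E[(v − w)·1(p < w ∧ w ≤ v)] ≤ (1 − q) · E[(v − p)·1(w ≤ p ∧ p ≤ v)]. -/
open MeasureTheory ProbabilityTheory

theorem stmt7 {Ω : Type*} [MeasurableSpace Ω] (μ : Measure Ω) [IsProbabilityMeasure μ]
    (v w : Ω → ℝ) (hv : Measurable v) (hw : Measurable w)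
    (hvi : Integrable v μ) (hwi : Integrable w μ)
    (hindep : IndepFun v w μ) (p : ℝ) (q : ℝ)
    (hq : q = min (μ {ω | p ≤ v ω}).toReal (μ {ω | w ω ≤ p}).toReal) :
    q * ∫ ω, (if p < w ω ∧ w ω ≤ v ω then v ω - w ω else 0) ∂μ ≤
      (1 - q) * ∫ ω, (if w ω ≤ p ∧ p ≤ v ω then v ω - p else 0) ∂μ := by
  classical
  set f : ℝ → ℝ := fun x => if p ≤ x then x - p else 0 with hf_def
  set g : ℝ → ℝ := fun y => if p < y then (1:ℝ) else 0 with hg_def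
  set g' : ℝ → ℝ := fun y => if y ≤ p then (1:ℝ) else 0 with hg'_def
  have hfm : Measurable f :=
    Measurable.ite (measurableSet_le measurable_const measurable_id)
      (measurable_id.sub measurable_const) measurable_const
  have hgm : Measurable g :=
    Measurable.ite (measurableSet_lt measurable_const measurable_id)
      measurable_const measurable_const
  have hg'm : Measurable g' :=
    Measurable.ite (measurableSet_le measurable_id measurable_const)
      measurable_const measurable_const
  -- abbreviations
  set b : ℝ := (μ {ω | w ω ≤ p}).toReal with hb_def
  set a : ℝ := (μ {ω | p ≤ v ω}).toReal with ha_def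
  have hb0 : 0 ≤ b := ENNReal.toReal_nonneg
  have hb1 : b ≤ 1 := by
    rw [hb_def, ← ENNReal.toReal_one]
    exact ENNReal.toReal_mono ENNReal.one_ne_top prob_le_one
  have hq0 : 0 ≤ q := by
    rw [hq]; exact le_min ENNReal.toReal_nonneg ENNReal.toReal_nonneg
  have hqb : q ≤ b := by rw [hq]; exact min_le_right _ _
  -- integrability of f ∘ v
  have hfvi : Integrable (fun ω => f (v ω)) μ := by
    refine (hvi.abs.add (integrable_const |p|)).mono'
      ((hfm.comp hv).aestronglyMeasurable) ?_
    filter_upwards with ω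
    simp only [hf_def, Real.norm_eq_abs, Pi.add_apply, Pi.abs_apply]
    split
    · simpa [sub_eq_add_neg] using abs_add_le (v ω) (-p)
    · simp only [abs_zero]; positivity
  -- integrals of indicators
  have hgw_int : ∫ ω, g (w ω) ∂μ = (μ {ω | p < w ω}).toReal := by
    have : (fun ω => g (w ω)) = Set.indicator {ω | p < w ω} (fun _ => (1:ℝ)) := by
      funext ω; simp [hg_def, Set.indicator_apply, Set.mem_setOf_eq]
    rw [this, integral_indicator_const _ (measurableSet_lt measurable_const hw)]
    simp [measureReal_def]
  have hg'w_int : ∫ ω, g' (w ω) ∂μ = b := by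
    have : (fun ω => g' (w ω)) = Set.indicator {ω | w ω ≤ p} (fun _ => (1:ℝ)) := by
      funext ω; simp [hg'_def, Set.indicator_apply, Set.mem_setOf_eq]
    rw [this, integral_indicator_const _ (measurableSet_le hw measurable_const)]
    simp [hb_def, measureReal_def]
  have hcompl : (μ {ω | p < w ω}).toReal = 1 - b := by
    have hset : {ω | p < w ω} = {ω | w ω ≤ p}ᶜ := by
      ext ω; simp [not_le]
    rw [hset, measure_compl (measurableSet_le hw measurable_const) (measure_ne_top μ _),
      measure_univ, ENNReal.toReal_sub_of_le prob_le_one ENNReal.one_ne_top]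
    simp [hb_def]
  -- independence products
  have hind1 : IndepFun (fun ω => f (v ω)) (fun ω => g (w ω)) μ := hindep.comp hfm hgm
  have hind2 : IndepFun (fun ω => f (v ω)) (fun ω => g' (w ω)) μ := hindep.comp hfm hg'm
  set G : ℝ := ∫ ω, f (v ω) ∂μ with hG_def
  have hG0 : 0 ≤ G := by
    rw [hG_def]
    apply integral_nonneg
    intro ω
    simp only [hf_def, Pi.zero_apply]
    split
    · linarith [sub_nonneg.mpr ‹p ≤ v ω›]
    · exact le_refl 0
  have hmul1 : ∫ ω, f (v ω) * g (w ω) ∂μ = G * (1 - b) := by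
    rw [show ∫ ω, f (v ω) * g (w ω) ∂μ = (∫ ω, f (v ω) ∂μ) * ∫ ω, g (w ω) ∂μ from
      hind1.integral_mul_eq_mul_integral (hfm.comp hv).aestronglyMeasurable
      (hgm.comp hw).aestronglyMeasurable, hgw_int, hcompl]
  have hmul2 : ∫ ω, f (v ω) * g' (w ω) ∂μ = G * b := by
    rw [show ∫ ω, f (v ω) * g' (w ω) ∂μ = (∫ ω, f (v ω) ∂μ) * ∫ ω, g' (w ω) ∂μ from
      hind2.integral_mul_eq_mul_integral (hfm.comp hv).aestronglyMeasurable
      (hg'm.comp hw).aestronglyMeasurable, hg'w_int]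
  -- identify RHS integral
  have hrhs : (∫ ω, (if w ω ≤ p ∧ p ≤ v ω then v ω - p else 0) ∂μ) = G * b := by
    rw [← hmul2]
    congr 1
    funext ω
    simp only [hf_def, hg'_def]
    by_cases h1 : w ω ≤ p <;> by_cases h2 : p ≤ v ω <;> simp [h1, h2]
  -- bound LHS integral
  have hprod_int : Integrable (fun ω => f (v ω) * g (w ω)) μ := by
    refine hfvi.abs.mono' (((hfm.comp hv).mul (hgm.comp hw)).aestronglyMeasurable) ?_
    filter_upwards with ω
    simp only [Real.norm_eq_abs, abs_mul, Pi.abs_apply]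
    have : |g (w ω)| ≤ 1 := by simp only [hg_def]; split <;> simp
    calc |f (v ω)| * |g (w ω)| ≤ |f (v ω)| * 1 :=
      mul_le_mul_of_nonneg_left this (abs_nonneg _)
    _ = |f (v ω)| := mul_one _
  have hlhs_int : Integrable (fun ω => (if p < w ω ∧ w ω ≤ v ω then v ω - w ω else 0)) μ := by
    refine ((hvi.abs.add hwi.abs)).mono'
      ?_ ?_
    · apply Measurable.aestronglyMeasurable
      apply Measurable.ite _ (hv.sub hw) measurable_const
      exact MeasurableSet.inter (measurableSet_lt measurable_const hw)
        (measurableSet_le hw hv)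
    · filter_upwards with ω
      simp only [Real.norm_eq_abs, Pi.add_apply, Pi.abs_apply]
      split
      · simpa [sub_eq_add_neg] using abs_add_le (v ω) (-w ω)
      · simp only [abs_zero]; positivity
  have hlhs : (∫ ω, (if p < w ω ∧ w ω ≤ v ω then v ω - w ω else 0) ∂μ) ≤ G * (1 - b) := by
    rw [← hmul1]
    apply integral_mono hlhs_int hprod_int
    intro ω
    simp only [hf_def, hg_def]
    by_cases h1 : p < w ω <;> by_cases h2 : w ω ≤ v ω <;>
      by_cases h3 : p ≤ v ω <;> simp [h1, h2, h3] <;> try linarith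
  rw [hrhs]
  calc q * ∫ ω, (if p < w ω ∧ w ω ≤ v ω then v ω - w ω else 0) ∂μ
      ≤ q * (G * (1 - b)) := mul_le_mul_of_nonneg_left hlhs hq0
    _ ≤ (1 - q) * (G * b) := by nlinarith
end

section
/- Let v and w be independent real-valued random variables on a probability space whose distributions are atomless, and let z ≤ z' be real numbers with P[v ≥ z'] = (1/2)·P[v ≥ z] > 0 and P[z ≤ w ≤ z'] > 0. Then there exists p ∈ [z, z'] such that P[v ≥ p | v ≥ z] = P[w ≤ p | z ≤ w ≤ z'], and this common value is at least 1/2. -/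
open MeasureTheory ProbabilityTheory Set

lemma cdf_continuous' (ν : Measure ℝ) [IsProbabilityMeasure ν] [NullSingletonClass ν] :
    Continuous (cdf ν) := by
  rw [continuous_iff_continuousAt]
  intro x
  rw [(monotone_cdf ν).continuousAt_iff_leftLim_eq_rightLim, (cdf ν).rightLim_eq]
  have h1 : (cdf ν).measure {x} = 0 := by rw [measure_cdf]; exact measure_singleton x
  rw [StieltjesFunction.measure_singleton] at h1
  have h2 : cdf ν x - Function.leftLim (cdf ν) x ≤ 0 := by
    by_contra hc
    push_neg at hc
    exact absurd h1 (ENNReal.ofReal_pos.2 hc).ne'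
  have h3 := (monotone_cdf ν).leftLim_le (le_refl x)
  linarith

lemma measure_Ici_cdf (ν : Measure ℝ) [IsProbabilityMeasure ν] [NullSingletonClass ν] (p : ℝ) :
    ν (Ici p) = ENNReal.ofReal (1 - cdf ν p) := by
  rw [← measure_congr (Ioi_ae_eq_Ici (μ := ν) (a := p)), ← compl_Iic,
    measure_compl measurableSet_Iic (measure_ne_top _ _), measure_univ, ← ofReal_cdf,
    ENNReal.ofReal_sub _ (cdf_nonneg ν p), ENNReal.ofReal_one]

lemma measure_Icc_cdf (ν : Measure ℝ) [IsProbabilityMeasure ν] [NullSingletonClass ν] {a p : ℝ}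
    (h : a ≤ p) : ν (Icc a p) = ENNReal.ofReal (cdf ν p - cdf ν a) := by
  rw [← measure_congr (Ioc_ae_eq_Icc (μ := ν) (a := a) (b := p))]
  have hsplit : ν (Iic a) + ν (Ioc a p) = ν (Iic p) := by
    rw [← measure_union (Iic_disjoint_Ioc le_rfl) measurableSet_Ioc, Iic_union_Ioc_eq_Iic h]
  rw [ENNReal.ofReal_sub _ (cdf_nonneg ν a), ofReal_cdf, ofReal_cdf,
    eq_comm, ← hsplit, ENNReal.add_sub_cancel_left (measure_ne_top _ _)]

theorem stmt9 {Ω : Type*} [MeasurableSpace Ω] (μ : Measure Ω) [IsProbabilityMeasure μ]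
    (v w : Ω → ℝ) (hv : Measurable v) (hw : Measurable w)
    (hva : ∀ x : ℝ, μ {ω | v ω = x} = 0) (hwa : ∀ x : ℝ, μ {ω | w ω = x} = 0)
    (hindep : IndepFun v w μ)
    (z z' : ℝ) (hzz' : z ≤ z')
    (hhalf : μ {ω | z' ≤ v ω} = (1 / 2) * μ {ω | z ≤ v ω})
    (hvpos : 0 < μ {ω | z' ≤ v ω})
    (hwpos : 0 < μ {ω | z ≤ w ω ∧ w ω ≤ z'}) :
    ∃ p ∈ Set.Icc z z',
      μ[|{ω | z ≤ v ω}] {ω | p ≤ v ω} = μ[|{ω | z ≤ w ω ∧ w ω ≤ z'}] {ω | w ω ≤ p} ∧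
        (1 / 2 : ENNReal) ≤ μ[|{ω | z ≤ v ω}] {ω | p ≤ v ω} := by
  set ν := μ.map v with hν
  set ρ := μ.map w with hρ
  haveI : IsProbabilityMeasure ν := Measure.isProbabilityMeasure_map hv.aemeasurable
  haveI : IsProbabilityMeasure ρ := Measure.isProbabilityMeasure_map hw.aemeasurable
  haveI : NullSingletonClass ν := ⟨fun x => by
    rw [hν, Measure.map_apply hv (measurableSet_singleton x)]; exact hva x⟩
  haveI : NullSingletonClass ρ := ⟨fun x => by
    rw [hρ, Measure.map_apply hw (measurableSet_singleton x)]; exact hwa x⟩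
  set F : ℝ → ℝ := fun p => 1 - cdf ν p with hF
  set G : ℝ → ℝ := fun p => cdf ρ p - cdf ρ z with hG
  have hFm : ∀ p : ℝ, μ {ω | p ≤ v ω} = ENNReal.ofReal (F p) := fun p => by
    rw [show {ω | p ≤ v ω} = v ⁻¹' Ici p from rfl, ← Measure.map_apply hv measurableSet_Ici,
      ← hν, measure_Ici_cdf]
  have hGm : ∀ p : ℝ, z ≤ p → μ {ω | z ≤ w ω ∧ w ω ≤ p} = ENNReal.ofReal (G p) := fun p hp => by
    rw [show {ω | z ≤ w ω ∧ w ω ≤ p} = w ⁻¹' Icc z p from rfl,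
      ← Measure.map_apply hw measurableSet_Icc, ← hρ, measure_Icc_cdf ρ hp]
  -- nonnegativity / basic facts
  have hFnonneg : ∀ p, 0 ≤ F p := fun p => by simp [hF, cdf_le_one]
  have hGnonneg : ∀ p, z ≤ p → 0 ≤ G p := fun p hp => by
    simp [hG, sub_nonneg, monotone_cdf ρ hp]
  have hFanti : ∀ p q : ℝ, p ≤ q → F q ≤ F p := fun p q hpq => by
    have := monotone_cdf ν hpq; simp only [hF]; linarith
  have hFz'pos : 0 < F z' := by
    rw [hFm z', ENNReal.ofReal_pos] at hvpos; exact hvpos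
  have hGz'pos : 0 < G z' := by
    rw [hGm z' hzz', ENNReal.ofReal_pos] at hwpos; exact hwpos
  have hFzpos : 0 < F z := lt_of_lt_of_le hFz'pos (hFanti z z' hzz')
  have hhalfR : F z' = F z / 2 := by
    rw [hFm z', hFm z, show (1/2 : ENNReal) = ENNReal.ofReal (1/2) by
        rw [ENNReal.ofReal_div_of_pos (by norm_num), ENNReal.ofReal_one,
          ENNReal.ofReal_ofNat],
      ← ENNReal.ofReal_mul (by norm_num)] at hhalf
    rw [ENNReal.ofReal_eq_ofReal_iff (hFnonneg z')
      (by positivity)] at hhalf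
    linarith
  have hGz : G z = 0 := by simp [hG]
  -- intermediate value theorem
  set h : ℝ → ℝ := fun p => F p * G z' - G p * F z with hh
  have hcont : Continuous h := by
    have h1 := cdf_continuous' ν
    have h2 := cdf_continuous' ρ
    fun_prop
  have hhz : h z = F z * G z' := by simp [hh, hGz]
  have hhz' : h z' = -(F z * G z') / 2 := by
    simp only [hh, hhalfR]; ring
  clear_value F G h
  have hivt : (0 : ℝ) ∈ h '' Icc z z' := by
    apply intermediate_value_Icc' hzz' hcont.continuousOn
    have hpos := mul_pos hFzpos hGz'pos
    rw [Set.mem_Icc, hhz, hhz']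
    constructor <;> linarith
  obtain ⟨p, hpmem, hp0⟩ := hivt
  refine ⟨p, hpmem, ?_⟩
  obtain ⟨hzp, hpz'⟩ := hpmem
  -- rewrite the conditional measures
  have hAmeas : MeasurableSet {ω | z ≤ v ω} := hv measurableSet_Ici
  have hBmeas : MeasurableSet {ω | z ≤ w ω ∧ w ω ≤ z'} := hw measurableSet_Icc
  have hAint : {ω | z ≤ v ω} ∩ {ω | p ≤ v ω} = {ω | p ≤ v ω} :=
    Set.inter_eq_self_of_subset_right (fun ω hω => le_trans hzp hω)
  have hBint : {ω | z ≤ w ω ∧ w ω ≤ z'} ∩ {ω | w ω ≤ p} = {ω | z ≤ w ω ∧ w ω ≤ p} := by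
    ext ω; simp only [Set.mem_inter_iff, Set.mem_setOf_eq]
    exact ⟨fun ⟨⟨h1, _⟩, h3⟩ => ⟨h1, h3⟩, fun ⟨h1, h3⟩ => ⟨⟨h1, le_trans h3 hpz'⟩, h3⟩⟩
  have hL : μ[|{ω | z ≤ v ω}] {ω | p ≤ v ω}
      = (ENNReal.ofReal (F z))⁻¹ * ENNReal.ofReal (F p) := by
    rw [cond_apply hAmeas, hAint, hFm, hFm]
  have hR : μ[|{ω | z ≤ w ω ∧ w ω ≤ z'}] {ω | w ω ≤ p}
      = (ENNReal.ofReal (G z'))⁻¹ * ENNReal.ofReal (G p) := by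
    rw [cond_apply hBmeas, hBint, hGm z' hzz', hGm p hzp]
  have hFzne : ENNReal.ofReal (F z) ≠ 0 := (ENNReal.ofReal_pos.2 hFzpos).ne'
  have key : F p * G z' = G p * F z := by
    have : h p = 0 := hp0
    simp only [hh] at this; linarith
  constructor
  · rw [hL, hR]
    rw [← ENNReal.toReal_eq_toReal_iff' (by finiteness) (by finiteness)]
    rw [ENNReal.toReal_mul, ENNReal.toReal_mul, ENNReal.toReal_inv, ENNReal.toReal_inv,
      ENNReal.toReal_ofReal (hFnonneg z), ENNReal.toReal_ofReal (hFnonneg p),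
      ENNReal.toReal_ofReal (hGnonneg z' hzz'), ENNReal.toReal_ofReal (hGnonneg p hzp)]
    field_simp
    linarith
  · rw [hL]
    have hmono : ENNReal.ofReal (F z') ≤ ENNReal.ofReal (F p) :=
      ENNReal.ofReal_le_ofReal (hFanti p z' hpz')
    calc (1 / 2 : ENNReal) = (ENNReal.ofReal (F z))⁻¹ * ENNReal.ofReal (F z') := by
          rw [← hFm z', ← hFm z, hhalf, mul_comm (1/2 : ENNReal), ← mul_assoc,
            ENNReal.inv_mul_cancel (by rw [hFm z]; exact hFzne) (measure_ne_top _ _), one_mul]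
      _ ≤ (ENNReal.ofReal (F z))⁻¹ * ENNReal.ofReal (F p) := by
          exact mul_le_mul_right hmono _
end

section
/- Let X be an integrable real-valued random variable on a probability space, let t be a real number, and let A be a measurable event with P[A] = P[X ≥ t]. Then E[X·1_A] ≤ E[X·1(X ≥ t)]. -/
open MeasureTheory ProbabilityTheory

theorem stmt10 {Ω : Type*} [MeasurableSpace Ω] (μ : Measure Ω) [IsProbabilityMeasure μ]
    (X : Ω → ℝ) (hX : Measurable X) (hXi : Integrable X μ)
    (t : ℝ) (A : Set Ω) (hA : MeasurableSet A)
    (hPA : μ A = μ {ω | t ≤ X ω}) :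
    ∫ ω in A, X ω ∂μ ≤ ∫ ω in {ω | t ≤ X ω}, X ω ∂μ := by
  set B := {ω | t ≤ X ω} with hBdef
  have hB : MeasurableSet B := measurableSet_le measurable_const hX
  have hint : ∀ s : Set Ω, IntegrableOn X s μ := fun s => hXi.integrableOn
  have hdisjA : Disjoint (A ∩ B) (A \ B) :=
    Set.disjoint_sdiff_right.mono_left Set.inter_subset_right
  have hdisjB : Disjoint (A ∩ B) (B \ A) :=
    Set.disjoint_sdiff_right.mono_left Set.inter_subset_left
  have hsplitA : ∫ ω in A, X ω ∂μ = ∫ ω in A ∩ B, X ω ∂μ + ∫ ω in A \ B, X ω ∂μ := by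
    rw [← setIntegral_union hdisjA (hA.diff hB) (hint _) (hint _), Set.inter_union_diff]
  have hsplitB : ∫ ω in B, X ω ∂μ = ∫ ω in A ∩ B, X ω ∂μ + ∫ ω in B \ A, X ω ∂μ := by
    rw [← setIntegral_union hdisjB (hB.diff hA) (hint _) (hint _), Set.inter_comm,
      Set.inter_union_diff]
  have hm : μ (A \ B) = μ (B \ A) := by
    have h1 : μ (A \ B) + μ (A ∩ B) = μ A := measure_diff_add_inter A hB
    have h2 : μ (B \ A) + μ (B ∩ A) = μ B := measure_diff_add_inter B hA
    rw [Set.inter_comm] at h2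
    have hfin : μ (A ∩ B) ≠ ⊤ := (measure_lt_top μ _).ne
    have h3 : μ (A \ B) + μ (A ∩ B) = μ (B \ A) + μ (A ∩ B) := by
      rw [h1, h2, hPA]
    exact ((ENNReal.cancel_of_ne hfin).inj_left).mp h3
  have key : ∫ ω in A \ B, X ω ∂μ ≤ ∫ ω in B \ A, X ω ∂μ := by
    calc ∫ ω in A \ B, X ω ∂μ
        ≤ ∫ _ω in A \ B, t ∂μ := by
          refine setIntegral_mono_on (hint _) (integrableOn_const (measure_lt_top _ _).ne enorm_ne_top)
            (hA.diff hB) (fun ω hω => le_of_lt (lt_of_not_ge hω.2))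
      _ = (μ (A \ B)).toReal * t := by rw [setIntegral_const]; simp [smul_eq_mul, Measure.real]
      _ = (μ (B \ A)).toReal * t := by rw [hm]
      _ = ∫ _ω in B \ A, t ∂μ := by rw [setIntegral_const]; simp [smul_eq_mul, Measure.real]
      _ ≤ ∫ ω in B \ A, X ω ∂μ := by
          refine setIntegral_mono_on (integrableOn_const (measure_lt_top _ _).ne enorm_ne_top)
            (hint _) (hB.diff hA) (fun ω hω => hω.1)
  rw [hsplitA, hsplitB]
  linarith
end

section
/- Let X be an integrable real-valued random variable on a probability space, let s be a real number, and let B be a measurable event with P[B] = P[X ≤ s]. Then E[X·1_B] ≥ E[X·1(X ≤ s)]. -/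
open MeasureTheory ProbabilityTheory

theorem stmt11 {Ω : Type*} [MeasurableSpace Ω] (μ : Measure Ω) [IsProbabilityMeasure μ]
    (X : Ω → ℝ) (hX : Measurable X) (hXi : Integrable X μ)
    (s : ℝ) (B : Set Ω) (hB : MeasurableSet B)
    (hPB : μ B = μ {ω | X ω ≤ s}) :
    ∫ ω in {ω | X ω ≤ s}, X ω ∂μ ≤ ∫ ω in B, X ω ∂μ := by
  set A : Set Ω := {ω | X ω ≤ s} with hA
  have hAm : MeasurableSet A := hX measurableSet_Iic
  have hiA : IntegrableOn X A μ := hXi.integrableOn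
  have hiB : IntegrableOn X B μ := hXi.integrableOn
  -- measures of symmetric difference pieces agree
  have hfin : ∀ S : Set Ω, μ S ≠ ⊤ := fun S => measure_ne_top μ S
  have hμeq : μ (A \ B) = μ (B \ A) := by
    have h1 : μ (A ∩ B) + μ (A \ B) = μ A := measure_inter_add_diff A hB
    have h2 : μ (B ∩ A) + μ (B \ A) = μ B := measure_inter_add_diff B hAm
    rw [Set.inter_comm] at h2
    have := h1.trans (hPB.symm.trans h2.symm)
    exact (ENNReal.add_right_inj (hfin _)).mp this
  have splitA : ∫ ω in A ∩ B, X ω ∂μ + ∫ ω in A \ B, X ω ∂μ = ∫ ω in A, X ω ∂μ :=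
    integral_inter_add_diff hB hiA
  have splitB : ∫ ω in B ∩ A, X ω ∂μ + ∫ ω in B \ A, X ω ∂μ = ∫ ω in B, X ω ∂μ :=
    integral_inter_add_diff hAm hiB
  rw [Set.inter_comm] at splitB
  rw [← splitA, ← splitB]
  refine add_le_add le_rfl ?_
  have hconst : s * (μ (A \ B)).toReal = s * (μ (B \ A)).toReal := by rw [hμeq]
  calc ∫ ω in A \ B, X ω ∂μ ≤ ∫ _ω in A \ B, s ∂μ := by
        apply setIntegral_mono_on (hiA.mono_set Set.diff_subset)
          (integrableOn_const (hfin _)) (hAm.diff hB)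
        intro ω hω
        exact hω.1
    _ = s * (μ (A \ B)).toReal := by simp [mul_comm, measureReal_def]
    _ = s * (μ (B \ A)).toReal := hconst
    _ = ∫ _ω in B \ A, s ∂μ := by simp [mul_comm, measureReal_def]
    _ ≤ ∫ ω in B \ A, X ω ∂μ := by
        apply setIntegral_mono_on (integrableOn_const (hfin _))
          (hiB.mono_set Set.diff_subset) (hB.diff hAm)
        intro ω hω
        exact le_of_lt (lt_of_not_ge hω.2)
end

section
/- Let F̄ : ℝ → ℝ be an antitone function and G : ℝ → ℝ a monotone (nondecreasing) function, let n, m be positive reals, and let p̄, pᴮ, pˢ, qᴮ, qˢ be reals satisfying: n·F̄(p̄) = m·G(p̄); F̄(pᴮ) = qᴮ; G(pˢ) = qˢ; n·qᴮ = m·qˢ; and the minimality conditions that F̄(p̄) = qᴮ implies pᴮ = p̄, and G(p̄) = qˢ implies pˢ = p̄. Then either (pᴮ ≥ p̄ and p̄ ≥ pˢ) or (pˢ ≥ p̄ and p̄ ≥ pᴮ). -/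
theorem stmt12 (Fbar G : ℝ → ℝ) (hF : Antitone Fbar) (hG : Monotone G)
    (n m : ℝ) (hn : 0 < n) (hm : 0 < m)
    (pbar pB pS qB qS : ℝ)
    (hbal : n * Fbar pbar = m * G pbar)
    (hqB : Fbar pB = qB) (hqS : G pS = qS)
    (hopt : n * qB = m * qS)
    (hminB : Fbar pbar = qB → pB = pbar)
    (hminS : G pbar = qS → pS = pbar) :
    (pB ≥ pbar ∧ pbar ≥ pS) ∨ (pS ≥ pbar ∧ pbar ≥ pB) := by
  rcases lt_trichotomy qB (Fbar pbar) with h | h | h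
  · left
    have hGS : G pS < G pbar := by
      have : m * G pS < m * G pbar := by
        rw [hqS, ← hbal, ← hopt]
        exact (mul_lt_mul_iff_right₀ hn).2 h
      exact lt_of_mul_lt_mul_left this hm.le
    constructor
    · by_contra hc
      push_neg at hc
      have := hF hc.le
      rw [hqB] at this
      linarith
    · by_contra hc
      push_neg at hc
      exact absurd (hG hc.le) (not_le.2 hGS)
  · have h1 := hminB h.symm
    have h2 : G pbar = qS := by
      have : m * G pbar = m * qS := by rw [← hbal, ← h, hopt]
      exact mul_left_cancel₀ hm.ne' this
    have h3 := hminS h2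
    exact Or.inl ⟨h1.ge, h3.le⟩
  · right
    have hGS : G pbar < G pS := by
      have : m * G pbar < m * G pS := by
        rw [hqS, ← hbal, ← hopt]
        exact (mul_lt_mul_iff_right₀ hn).2 h
      exact lt_of_mul_lt_mul_left this hm.le
    constructor
    · by_contra hc
      push_neg at hc
      exact absurd (hG hc.le) (not_le.2 hGS)
    · by_contra hc
      push_neg at hc
      have := hF hc.le
      rw [hqB] at this
      linarith
end

section
/- Let v and w be integrable real-valued random variables on a probability space, let n, m be positive reals, and let p̄, pᴮ, pˢ be reals such that either (pᴮ ≥ p̄ and p̄ ≥ pˢ) or (pˢ ≥ p̄ and p̄ ≥ pᴮ). Assume n·P[v ≥ p̄] = m·P[w ≤ p̄] and n·P[v ≥ pᴮ] = m·P[w ≤ pˢ]. Then n·E[v·1(v ≥ pᴮ)] − m·E[w·1(w ≤ pˢ)] ≤ n·E[v·1(v ≥ p̄)] − m·E[w·1(w ≤ p̄)]. -/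
open MeasureTheory ProbabilityTheory

lemma stmt13_aux {Ω : Type*} [MeasurableSpace Ω] (μ : Measure Ω) [IsProbabilityMeasure μ]
    (f : Ω → ℝ) (hfi : Integrable f μ) (E : Set Ω) (hE : MeasurableSet E) (c : ℝ)
    (h : ∀ x ∈ E, c ≤ f x) : c * (μ E).toReal ≤ ∫ x in E, f x ∂μ := by
  have h0 : ∫ x in E, (fun _ => c) x ∂μ ≤ ∫ x in E, f x ∂μ :=
    setIntegral_mono_on ((integrableOn_const_iff (C := c)).mpr (Or.inr (measure_lt_top μ E)))
      hfi.integrableOn hE h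
  simpa [setIntegral_const, smul_eq_mul, mul_comm, measureReal_def] using h0

lemma stmt13_aux' {Ω : Type*} [MeasurableSpace Ω] (μ : Measure Ω) [IsProbabilityMeasure μ]
    (f : Ω → ℝ) (hfi : Integrable f μ) (E : Set Ω) (hE : MeasurableSet E) (c : ℝ)
    (h : ∀ x ∈ E, f x ≤ c) : ∫ x in E, f x ∂μ ≤ c * (μ E).toReal := by
  have h0 : ∫ x in E, f x ∂μ ≤ ∫ x in E, (fun _ => c) x ∂μ :=
    setIntegral_mono_on hfi.integrableOn
      ((integrableOn_const_iff (C := c)).mpr (Or.inr (measure_lt_top μ E))) hE h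
  simpa [setIntegral_const, smul_eq_mul, mul_comm, measureReal_def] using h0

theorem stmt13 {Ω : Type*} [MeasurableSpace Ω] (μ : Measure Ω) [IsProbabilityMeasure μ]
    (v w : Ω → ℝ) (hv : Measurable v) (hw : Measurable w)
    (hvi : Integrable v μ) (hwi : Integrable w μ)
    (n m : ℝ) (hn : 0 < n) (hm : 0 < m)
    (pbar pB pS : ℝ)
    (horder : (pB ≥ pbar ∧ pbar ≥ pS) ∨ (pS ≥ pbar ∧ pbar ≥ pB))
    (h1 : n * (μ {ω | pbar ≤ v ω}).toReal = m * (μ {ω | w ω ≤ pbar}).toReal)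
    (h2 : n * (μ {ω | pB ≤ v ω}).toReal = m * (μ {ω | w ω ≤ pS}).toReal) :
    n * (∫ ω, (if pB ≤ v ω then v ω else 0) ∂μ) -
        m * (∫ ω, (if w ω ≤ pS then w ω else 0) ∂μ) ≤
      n * (∫ ω, (if pbar ≤ v ω then v ω else 0) ∂μ) -
        m * (∫ ω, (if w ω ≤ pbar then w ω else 0) ∂μ) := by
  have hAv : ∀ p : ℝ, MeasurableSet {ω | p ≤ v ω} :=
    fun p => measurableSet_le measurable_const hv
  have hAw : ∀ p : ℝ, MeasurableSet {ω | w ω ≤ p} :=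
    fun p => measurableSet_le hw measurable_const
  have hIv : ∀ p : ℝ, ∫ ω, (if p ≤ v ω then v ω else 0) ∂μ = ∫ ω in {ω | p ≤ v ω}, v ω ∂μ := by
    intro p
    rw [← integral_indicator (hAv p)]
    simp [Set.indicator_apply]
  have hIw : ∀ p : ℝ, ∫ ω, (if w ω ≤ p then w ω else 0) ∂μ = ∫ ω in {ω | w ω ≤ p}, w ω ∂μ := by
    intro p
    rw [← integral_indicator (hAw p)]
    simp [Set.indicator_apply]
  rw [hIv, hIv, hIw, hIw]
  -- helper for measure of set differences
  have hmdiff : ∀ (S T : Set Ω), T ⊆ S → MeasurableSet T →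
      (μ (S \ T)).toReal = (μ S).toReal - (μ T).toReal := by
    intro S T hTS hT
    rw [measure_diff hTS hT.nullMeasurableSet (measure_ne_top μ T),
      ENNReal.toReal_sub_of_le (measure_mono hTS) (measure_ne_top μ S)]
  rcases horder with ⟨hB, hS⟩ | ⟨hS, hB⟩
  · -- pbar ≤ pB, pS ≤ pbar
    have hvsub : {ω | pB ≤ v ω} ⊆ {ω | pbar ≤ v ω} := fun x hx => le_trans hB hx
    have hwsub : {ω | w ω ≤ pS} ⊆ {ω | w ω ≤ pbar} := fun x hx => le_trans hx hS
    set E := {ω | pbar ≤ v ω} \ {ω | pB ≤ v ω} with hEdef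
    set F := {ω | w ω ≤ pbar} \ {ω | w ω ≤ pS} with hFdef
    have hvd : ∫ ω in E, v ω ∂μ =
        (∫ ω in {ω | pbar ≤ v ω}, v ω ∂μ) - ∫ ω in {ω | pB ≤ v ω}, v ω ∂μ :=
      integral_diff (hAv pB) hvi.integrableOn hvsub
    have hwd : ∫ ω in F, w ω ∂μ =
        (∫ ω in {ω | w ω ≤ pbar}, w ω ∂μ) - ∫ ω in {ω | w ω ≤ pS}, w ω ∂μ :=
      integral_diff (hAw pS) hwi.integrableOn hwsub
    have hmeq : n * (μ E).toReal = m * (μ F).toReal := by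
      rw [hmdiff _ _ hvsub (hAv pB), hmdiff _ _ hwsub (hAw pS)]
      ring_nf
      nlinarith [h1, h2]
    have hvb : pbar * (μ E).toReal ≤ ∫ ω in E, v ω ∂μ :=
      stmt13_aux μ v hvi E ((hAv pbar).diff (hAv pB)) pbar (fun x hx => hx.1)
    have hwb : ∫ ω in F, w ω ∂μ ≤ pbar * (μ F).toReal :=
      stmt13_aux' μ w hwi F ((hAw pbar).diff (hAw pS)) pbar (fun x hx => hx.1)
    have key : m * ∫ ω in F, w ω ∂μ ≤ n * ∫ ω in E, v ω ∂μ := by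
      calc m * ∫ ω in F, w ω ∂μ ≤ m * (pbar * (μ F).toReal) :=
              mul_le_mul_of_nonneg_left hwb hm.le
        _ = pbar * (m * (μ F).toReal) := by ring
        _ = pbar * (n * (μ E).toReal) := by rw [hmeq]
        _ = n * (pbar * (μ E).toReal) := by ring
        _ ≤ n * ∫ ω in E, v ω ∂μ := mul_le_mul_of_nonneg_left hvb hn.le
    have hvd' := congrArg (fun x => n * x) hvd
    have hwd' := congrArg (fun x => m * x) hwd
    simp only [mul_sub] at hvd' hwd'
    linarith [key, hvd', hwd']
  · -- pB ≤ pbar, pbar ≤ pS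
    have hvsub : {ω | pbar ≤ v ω} ⊆ {ω | pB ≤ v ω} := fun x hx => le_trans hB hx
    have hwsub : {ω | w ω ≤ pbar} ⊆ {ω | w ω ≤ pS} := fun x hx => le_trans hx hS
    set E := {ω | pB ≤ v ω} \ {ω | pbar ≤ v ω} with hEdef
    set F := {ω | w ω ≤ pS} \ {ω | w ω ≤ pbar} with hFdef
    have hvd : ∫ ω in E, v ω ∂μ =
        (∫ ω in {ω | pB ≤ v ω}, v ω ∂μ) - ∫ ω in {ω | pbar ≤ v ω}, v ω ∂μ :=
      integral_diff (hAv pbar) hvi.integrableOn hvsub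
    have hwd : ∫ ω in F, w ω ∂μ =
        (∫ ω in {ω | w ω ≤ pS}, w ω ∂μ) - ∫ ω in {ω | w ω ≤ pbar}, w ω ∂μ :=
      integral_diff (hAw pbar) hwi.integrableOn hwsub
    have hmeq : n * (μ E).toReal = m * (μ F).toReal := by
      rw [hmdiff _ _ hvsub (hAv pbar), hmdiff _ _ hwsub (hAw pbar)]
      nlinarith [h1, h2]
    have hvb : ∫ ω in E, v ω ∂μ ≤ pbar * (μ E).toReal :=
      stmt13_aux' μ v hvi E ((hAv pB).diff (hAv pbar)) pbar
        (fun x hx => le_of_not_ge hx.2)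
    have hwb : pbar * (μ F).toReal ≤ ∫ ω in F, w ω ∂μ :=
      stmt13_aux μ w hwi F ((hAw pS).diff (hAw pbar)) pbar
        (fun x hx => le_of_not_ge hx.2)
    have key : n * ∫ ω in E, v ω ∂μ ≤ m * ∫ ω in F, w ω ∂μ := by
      calc n * ∫ ω in E, v ω ∂μ ≤ n * (pbar * (μ E).toReal) :=
              mul_le_mul_of_nonneg_left hvb hn.le
        _ = pbar * (n * (μ E).toReal) := by ring
        _ = pbar * (m * (μ F).toReal) := by rw [hmeq]
        _ = m * (pbar * (μ F).toReal) := by ring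
        _ ≤ m * ∫ ω in F, w ω ∂μ := mul_le_mul_of_nonneg_left hwb hm.le
    have hvd' := congrArg (fun x => n * x) hvd
    have hwd' := congrArg (fun x => m * x) hwd
    simp only [mul_sub] at hvd' hwd'
    linarith [key, hvd', hwd']
end

section
/- For all natural numbers N, p, w with 1 ≤ w ≤ p ≤ N and every real number ε ≥ 5/36: Σ_{v=p}^{N} (v + ε − w)·10^(w−v) ≤ 2·(p + ε − w)·10^(w−p), where the sum is over the reals and 10^(w−v) denotes the real power 10^w / 10^v. -/
lemma stmt15_aux (a : ℝ) (ha : 5/36 ≤ a) (M : ℕ) :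
    ∑ k ∈ Finset.range (M+1), (a + k) * (1/10 : ℝ)^k ≤
      2*a - (a + M + 10/9) * (1/10 : ℝ)^M / 9 := by
  induction M with
  | zero => simp; linarith
  | succ n ih =>
    rw [Finset.sum_range_succ]
    have h10 : (0:ℝ) < (1/10:ℝ)^n := by positivity
    have hpow : ((1:ℝ)/10)^(n+1) = (1/10:ℝ)^n * (1/10) := pow_succ _ _
    push_cast
    push_cast at ih
    nlinarith [ih, h10, mul_pos h10 (by linarith : (0:ℝ) < a)]

theorem stmt15 (N p w : ℕ) (hw : 1 ≤ w) (hwp : w ≤ p) (hpN : p ≤ N)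
    (ε : ℝ) (hε : 5 / 36 ≤ ε) :
    ∑ v ∈ Finset.Icc p N, ((v : ℝ) + ε - (w : ℝ)) * ((10 : ℝ) ^ w / (10 : ℝ) ^ v) ≤
      2 * ((p : ℝ) + ε - (w : ℝ)) * ((10 : ℝ) ^ w / (10 : ℝ) ^ p) := by
  set a : ℝ := (p:ℝ) + ε - w with ha_def
  have hwp' : (w:ℝ) ≤ p := Nat.cast_le.2 hwp
  have ha : 5/36 ≤ a := by simp only [ha_def]; linarith
  have hC : (0:ℝ) < (10:ℝ)^w / (10:ℝ)^p := by positivity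
  rw [← Finset.Ico_add_one_right_eq_Icc, Finset.sum_Ico_eq_sum_range]
  have hNp : N + 1 - p = (N - p) + 1 := by omega
  rw [hNp]
  have key : ∀ k : ℕ, ((↑(p+k) : ℝ) + ε - w) * ((10:ℝ)^w / (10:ℝ)^(p+k))
      = ((a + k) * (1/10:ℝ)^k) * ((10:ℝ)^w / (10:ℝ)^p) := by
    intro k
    push_cast
    rw [pow_add]
    field_simp
    have h1 : (1/10:ℝ)^k * 10^k = 1 := by rw [← mul_pow]; norm_num
    rw [ha_def]
    linear_combination (-((k:ℝ) + ((p:ℝ) + ε - w))) * h1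
  calc ∑ k ∈ Finset.range (N - p + 1), ((↑(p+k) : ℝ) + ε - w) * ((10:ℝ)^w / (10:ℝ)^(p+k))
      = (∑ k ∈ Finset.range (N - p + 1), (a + k) * (1/10:ℝ)^k) * ((10:ℝ)^w / (10:ℝ)^p) := by
        rw [Finset.sum_mul]; exact Finset.sum_congr rfl fun k _ => key k
    _ ≤ (2*a) * ((10:ℝ)^w / (10:ℝ)^p) := by
        apply mul_le_mul_of_nonneg_right _ hC.le
        have := stmt15_aux a ha (N - p)
        have hrem : 0 ≤ (a + (N-p:ℕ) + 10/9) * (1/10:ℝ)^(N-p) / 9 := by positivity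
        linarith
    _ = 2 * a * ((10:ℝ)^w / (10:ℝ)^p) := by ring
end

section
/- Fix a natural number N ≥ 1 and a real number ε with 5/36 ≤ ε < 1. Define OPT = Σ_{w=1}^{N} Σ_{v=w}^{N} (v + ε − w)·10^(w−v) and, for a real number p, GFT(p) = Σ_{w=1}^{N} Σ_{v=1}^{N} 1(w ≤ p ∧ p ≤ v + ε)·(v + ε − w)·10^(w−v), all sums over the reals with 10^(w−v) = 10^w / 10^v. Then for every real p: N·GFT(p) ≤ 4·OPT. -/
open Finset

private lemma geomA18 (s : Finset ℕ) : ∑ i ∈ s, (1/10 : ℝ) ^ i ≤ 10/9 := by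
  have h := sum_le_hasSum s (fun i _ => by positivity)
    (hasSum_geometric_of_lt_one (by norm_num) (by norm_num : (1/10:ℝ) < 1))
  have h2 : ((1:ℝ) - 1/10)⁻¹ = 10/9 := by norm_num
  linarith

private lemma geomB18 (s : Finset ℕ) : ∑ i ∈ s, (i:ℝ) * (1/10 : ℝ) ^ i ≤ 10/81 := by
  have hs := hasSum_coe_mul_geometric_of_norm_lt_one (r := (1/10:ℝ))
    (by rw [Real.norm_eq_abs, abs_lt]; constructor <;> norm_num)
  have h := sum_le_hasSum s (fun i _ => by positivity) hs
  have h2 : (1/10:ℝ) / (1 - 1/10)^2 = 10/81 := by norm_num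
  linarith

private lemma sumA18 (w₀ : ℕ) (s : Finset ℕ) :
    ∑ w ∈ s, (if w ≤ w₀ then (1/10:ℝ) ^ (w₀ - w) else 0) ≤ 10/9 := by
  rw [← Finset.sum_filter]
  rw [← Finset.sum_image (f := fun i => (1/10:ℝ) ^ i) (g := fun w => w₀ - w)
    (fun x hx y hy hxy => by
      simp only [Finset.coe_filter, Finset.mem_coe, Finset.mem_filter, Set.mem_setOf_eq] at hx hy hxy; omega)]
  exact geomA18 _

private lemma sumB18 (w₀ : ℕ) (s : Finset ℕ) :
    ∑ w ∈ s, (if w ≤ w₀ then ((w₀ - w : ℕ):ℝ) * (1/10:ℝ) ^ (w₀ - w) else 0) ≤ 10/81 := by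
  rw [← Finset.sum_filter]
  rw [← Finset.sum_image (f := fun i : ℕ => (i:ℝ) * (1/10:ℝ) ^ i) (g := fun w => w₀ - w)
    (fun x hx y hy hxy => by
      simp only [Finset.coe_filter, Finset.mem_coe, Finset.mem_filter, Set.mem_setOf_eq] at hx hy hxy; omega)]
  exact geomB18 _

private lemma sumC18 (v₀ : ℕ) (s : Finset ℕ) :
    ∑ v ∈ s, (if v₀ ≤ v then (1/10:ℝ) ^ (v - v₀) else 0) ≤ 10/9 := by
  rw [← Finset.sum_filter]
  rw [← Finset.sum_image (f := fun i => (1/10:ℝ) ^ i) (g := fun v => v - v₀)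
    (fun x hx y hy hxy => by
      simp only [Finset.coe_filter, Finset.mem_coe, Finset.mem_filter, Set.mem_setOf_eq] at hx hy hxy; omega)]
  exact geomA18 _

private lemma sumD18 (v₀ : ℕ) (s : Finset ℕ) :
    ∑ v ∈ s, (if v₀ ≤ v then ((v - v₀ : ℕ):ℝ) * (1/10:ℝ) ^ (v - v₀) else 0) ≤ 10/81 := by
  rw [← Finset.sum_filter]
  rw [← Finset.sum_image (f := fun i : ℕ => (i:ℝ) * (1/10:ℝ) ^ i) (g := fun v => v - v₀)
    (fun x hx y hy hxy => by
      simp only [Finset.coe_filter, Finset.mem_coe, Finset.mem_filter, Set.mem_setOf_eq] at hx hy hxy; omega)]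
  exact geomB18 _

private lemma gft18 (N : ℕ) (ε : ℝ) (hε1 : 5 / 36 ≤ ε) (hε2 : ε < 1) (p : ℝ) :
    (∑ w ∈ Finset.Icc 1 N, ∑ v ∈ Finset.Icc 1 N,
      (if (w : ℝ) ≤ p ∧ p ≤ (v : ℝ) + ε then
        ((v : ℝ) + ε - (w : ℝ)) * ((10 : ℝ) ^ w / (10 : ℝ) ^ v) else 0)) ≤ 4 * ε := by
  have hε0 : (0:ℝ) < ε := by linarith
  by_cases hp : p < 1
  · have hz : ∀ w ∈ Finset.Icc 1 N, (∑ v ∈ Finset.Icc 1 N,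
        (if (w : ℝ) ≤ p ∧ p ≤ (v : ℝ) + ε then
          ((v : ℝ) + ε - (w : ℝ)) * ((10 : ℝ) ^ w / (10 : ℝ) ^ v) else 0)) = 0 := by
      intro w hw
      apply Finset.sum_eq_zero
      intro v hv
      rw [if_neg]
      rintro ⟨h1, _⟩
      have hw1 : (1:ℝ) ≤ (w:ℝ) := by exact_mod_cast (Finset.mem_Icc.mp hw).1
      linarith
    rw [Finset.sum_congr rfl hz]
    simp only [Finset.sum_const, smul_zero]
    linarith
  push_neg at hp
  obtain ⟨w₀, hw1, hw2⟩ : ∃ n : ℕ, (n:ℝ) ≤ p ∧ p < (n:ℝ) + 1 := by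
    refine ⟨(⌊p⌋).toNat, ?_, ?_⟩
    · have : ((⌊p⌋.toNat : ℕ) : ℝ) = ((⌊p⌋ : ℤ) : ℝ) := by
        exact_mod_cast Int.toNat_of_nonneg (Int.floor_nonneg.mpr (by linarith))
      rw [this]; exact Int.floor_le p
    · have : ((⌊p⌋.toNat : ℕ) : ℝ) = ((⌊p⌋ : ℤ) : ℝ) := by
        exact_mod_cast Int.toNat_of_nonneg (Int.floor_nonneg.mpr (by linarith))
      rw [this]; exact Int.lt_floor_add_one p
  obtain ⟨v₀, hv1, hv2⟩ : ∃ n : ℕ, p - ε ≤ (n:ℝ) ∧ (n:ℝ) < p - ε + 1 := by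
    refine ⟨(⌈p - ε⌉).toNat, ?_, ?_⟩
    · have : ((⌈p - ε⌉.toNat : ℕ) : ℝ) = ((⌈p - ε⌉ : ℤ) : ℝ) := by
        exact_mod_cast Int.toNat_of_nonneg (Int.ceil_nonneg (by linarith))
      rw [this]; exact Int.le_ceil _
    · have : ((⌈p - ε⌉.toNat : ℕ) : ℝ) = ((⌈p - ε⌉ : ℤ) : ℝ) := by
        exact_mod_cast Int.toNat_of_nonneg (Int.ceil_nonneg (by linarith))
      rw [this]; exact Int.ceil_lt_add_one _
  have hwv : w₀ ≤ v₀ := by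
    have h : (w₀ : ℝ) < (v₀ : ℝ) + 1 := by linarith
    have h' : w₀ < v₀ + 1 := by exact_mod_cast h
    omega
  have hvw : v₀ ≤ w₀ + 1 := by
    have h : (v₀ : ℝ) < (w₀ : ℝ) + 2 := by linarith
    have h' : v₀ < w₀ + 2 := by exact_mod_cast h
    omega
  set K : ℝ := (10:ℝ)^w₀ / (10:ℝ)^v₀ with hKdef
  set c : ℝ := (v₀ : ℝ) + ε - (w₀ : ℝ) with hcdef
  have hwvR : (w₀ : ℝ) ≤ (v₀ : ℝ) := by exact_mod_cast hwv
  have hc0 : 0 ≤ c := by rw [hcdef]; linarith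
  have hK0 : 0 ≤ K := by rw [hKdef]; positivity
  -- pointwise bound
  have hterm : ∀ w ∈ Finset.Icc 1 N, ∀ v ∈ Finset.Icc 1 N,
      (if (w : ℝ) ≤ p ∧ p ≤ (v : ℝ) + ε then
        ((v : ℝ) + ε - (w : ℝ)) * ((10 : ℝ) ^ w / (10 : ℝ) ^ v) else 0) ≤
      (c * K) * ((if w ≤ w₀ then (1/10:ℝ) ^ (w₀ - w) else 0) *
          (if v₀ ≤ v then (1/10:ℝ) ^ (v - v₀) else 0))
      + K * ((if w ≤ w₀ then ((w₀ - w : ℕ):ℝ) * (1/10:ℝ) ^ (w₀ - w) else 0) *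
          (if v₀ ≤ v then (1/10:ℝ) ^ (v - v₀) else 0))
      + K * ((if w ≤ w₀ then (1/10:ℝ) ^ (w₀ - w) else 0) *
          (if v₀ ≤ v then ((v - v₀ : ℕ):ℝ) * (1/10:ℝ) ^ (v - v₀) else 0)) := by
    intro w hw v hv
    by_cases hind : (w : ℝ) ≤ p ∧ p ≤ (v : ℝ) + ε
    · obtain ⟨hA, hB⟩ := hind
      have hww : w ≤ w₀ := by
        have h : (w:ℝ) < (w₀:ℝ) + 1 := lt_of_le_of_lt hA hw2
        have h' : w < w₀ + 1 := by exact_mod_cast h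
        omega
      have hvv : v₀ ≤ v := by
        have h : (v₀:ℝ) < (v:ℝ) + 1 := by linarith
        have h' : v₀ < v + 1 := by exact_mod_cast h
        omega
      have hcond : (w : ℝ) ≤ p ∧ p ≤ (v : ℝ) + ε := ⟨hA, hB⟩
      rw [if_pos hcond]
      rw [if_pos hww, if_pos hvv, if_pos hww, if_pos hvv]
      have cast1 : ((w₀ - w : ℕ) : ℝ) = (w₀ : ℝ) - (w : ℝ) := Nat.cast_sub hww
      have cast2 : ((v - v₀ : ℕ) : ℝ) = (v : ℝ) - (v₀ : ℝ) := Nat.cast_sub hvv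
      have e1 : (10:ℝ) ^ w * (10:ℝ) ^ (w₀ - w) = (10:ℝ) ^ w₀ := by
        rw [← pow_add]; congr 1; omega
      have e2 : (10:ℝ) ^ v₀ * (10:ℝ) ^ (v - v₀) = (10:ℝ) ^ v := by
        rw [← pow_add]; congr 1; omega
      have key : (10:ℝ) ^ w / (10:ℝ) ^ v
          = K * ((1/10:ℝ) ^ (w₀ - w) * (1/10:ℝ) ^ (v - v₀)) := by
        rw [hKdef, one_div_pow, one_div_pow]
        rw [div_mul_div_comm, div_mul_div_comm]
        rw [mul_one, mul_one]
        rw [div_eq_div_iff (by positivity) (by positivity)]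
        rw [← e1, ← e2]; ring
      rw [key, hcdef, cast1, cast2]
      apply le_of_eq
      ring
    · rw [if_neg hind]
      have n1 : (0:ℝ) ≤ (if w ≤ w₀ then (1/10:ℝ) ^ (w₀ - w) else 0) := by
        split <;> positivity
      have n2 : (0:ℝ) ≤ (if v₀ ≤ v then (1/10:ℝ) ^ (v - v₀) else 0) := by
        split <;> positivity
      have n3 : (0:ℝ) ≤ (if w ≤ w₀ then ((w₀ - w : ℕ):ℝ) * (1/10:ℝ) ^ (w₀ - w) else 0) := by
        split <;> positivity
      have n4 : (0:ℝ) ≤ (if v₀ ≤ v then ((v - v₀ : ℕ):ℝ) * (1/10:ℝ) ^ (v - v₀) else 0) := by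
        split <;> positivity
      have t1 : (0:ℝ) ≤ (c * K) * ((if w ≤ w₀ then (1/10:ℝ) ^ (w₀ - w) else 0) *
          (if v₀ ≤ v then (1/10:ℝ) ^ (v - v₀) else 0)) :=
        mul_nonneg (mul_nonneg hc0 hK0) (mul_nonneg n1 n2)
      have t2 : (0:ℝ) ≤ K * ((if w ≤ w₀ then ((w₀ - w : ℕ):ℝ) * (1/10:ℝ) ^ (w₀ - w) else 0) *
          (if v₀ ≤ v then (1/10:ℝ) ^ (v - v₀) else 0)) :=
        mul_nonneg hK0 (mul_nonneg n3 n2)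
      have t3 : (0:ℝ) ≤ K * ((if w ≤ w₀ then (1/10:ℝ) ^ (w₀ - w) else 0) *
          (if v₀ ≤ v then ((v - v₀ : ℕ):ℝ) * (1/10:ℝ) ^ (v - v₀) else 0)) :=
        mul_nonneg hK0 (mul_nonneg n1 n4)
      linarith
  -- sum the bound
  have e : ∀ (a : ℝ) (f g : ℕ → ℝ),
      a * ((∑ w ∈ Finset.Icc 1 N, f w) * (∑ v ∈ Finset.Icc 1 N, g v))
        = ∑ w ∈ Finset.Icc 1 N, ∑ v ∈ Finset.Icc 1 N, a * (f w * g v) := by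
    intro a f g
    rw [Finset.sum_mul_sum, Finset.mul_sum]
    exact Finset.sum_congr rfl fun w _ => by rw [Finset.mul_sum]
  set Sg : ℝ := ∑ w ∈ Finset.Icc 1 N, (if w ≤ w₀ then (1/10:ℝ) ^ (w₀ - w) else 0) with hSg
  set Sg2 : ℝ := ∑ w ∈ Finset.Icc 1 N,
    (if w ≤ w₀ then ((w₀ - w : ℕ):ℝ) * (1/10:ℝ) ^ (w₀ - w) else 0) with hSg2
  set Sh : ℝ := ∑ v ∈ Finset.Icc 1 N, (if v₀ ≤ v then (1/10:ℝ) ^ (v - v₀) else 0) with hSh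
  set Sh2 : ℝ := ∑ v ∈ Finset.Icc 1 N,
    (if v₀ ≤ v then ((v - v₀ : ℕ):ℝ) * (1/10:ℝ) ^ (v - v₀) else 0) with hSh2
  have hbound : (∑ w ∈ Finset.Icc 1 N, ∑ v ∈ Finset.Icc 1 N,
      (if (w : ℝ) ≤ p ∧ p ≤ (v : ℝ) + ε then
        ((v : ℝ) + ε - (w : ℝ)) * ((10 : ℝ) ^ w / (10 : ℝ) ^ v) else 0)) ≤
      (c * K) * (Sg * Sh) + K * (Sg2 * Sh) + K * (Sg * Sh2) := by
    rw [hSg, hSg2, hSh, hSh2, e, e, e, ← Finset.sum_add_distrib]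
    simp only [← Finset.sum_add_distrib]
    exact Finset.sum_le_sum fun w hw => Finset.sum_le_sum fun v hv => hterm w hw v hv
  -- numeric bounds on the four sums
  have bSg : Sg ≤ 10/9 := sumA18 w₀ _
  have bSg2 : Sg2 ≤ 10/81 := sumB18 w₀ _
  have bSh : Sh ≤ 10/9 := sumC18 v₀ _
  have bSh2 : Sh2 ≤ 10/81 := sumD18 v₀ _
  have nSg : 0 ≤ Sg := Finset.sum_nonneg fun w _ => by split <;> positivity
  have nSg2 : 0 ≤ Sg2 := Finset.sum_nonneg fun w _ => by split <;> positivity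
  have nSh : 0 ≤ Sh := Finset.sum_nonneg fun v _ => by split <;> positivity
  have nSh2 : 0 ≤ Sh2 := Finset.sum_nonneg fun v _ => by split <;> positivity
  have pb1 : Sg * Sh ≤ (10/9) * (10/9) := mul_le_mul bSg bSh nSh (by norm_num)
  have pb2 : Sg2 * Sh ≤ (10/81) * (10/9) := mul_le_mul bSg2 bSh nSh (by norm_num)
  have pb3 : Sg * Sh2 ≤ (10/9) * (10/81) := mul_le_mul bSg bSh2 nSh2 (by norm_num)
  have p1n : 0 ≤ Sg * Sh := mul_nonneg nSg nSh
  have p2n : 0 ≤ Sg2 * Sh := mul_nonneg nSg2 nSh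
  have p3n : 0 ≤ Sg * Sh2 := mul_nonneg nSg nSh2
  rcases (by omega : v₀ = w₀ ∨ v₀ = w₀ + 1) with h | h
  · -- K = 1, c = ε
    have hK1 : K = 1 := by rw [hKdef, h]; field_simp
    have hc1 : c = ε := by rw [hcdef, h]; ring
    rw [hK1, hc1] at hbound
    have m1 : ε * (Sg * Sh) ≤ ε * (100/81) := by
      have : Sg * Sh ≤ 100/81 := by linarith
      exact mul_le_mul_of_nonneg_left this hε0.le
    simp only [mul_one, one_mul] at hbound
    linarith
  · -- K = 1/10, c = 1 + ε
    have hK1 : K = 1/10 := by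
      rw [hKdef, h, pow_succ]
      rw [div_eq_div_iff (by positivity) (by norm_num)]
      ring
    have hc1 : c = 1 + ε := by
      rw [hcdef, h]; push_cast; ring
    rw [hK1, hc1] at hbound
    have m1 : (1 + ε) * (Sg * Sh) ≤ (1 + ε) * (100/81) := by
      have h2 : Sg * Sh ≤ 100/81 := by linarith
      exact mul_le_mul_of_nonneg_left h2 (by linarith)
    nlinarith [hbound, m1, pb2, pb3]

theorem stmt18 (N : ℕ) (hN : 1 ≤ N) (ε : ℝ) (hε1 : 5 / 36 ≤ ε) (hε2 : ε < 1) (p : ℝ) :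
    (N : ℝ) *
        (∑ w ∈ Finset.Icc 1 N, ∑ v ∈ Finset.Icc 1 N,
          (if (w : ℝ) ≤ p ∧ p ≤ (v : ℝ) + ε then
            ((v : ℝ) + ε - (w : ℝ)) * ((10 : ℝ) ^ w / (10 : ℝ) ^ v) else 0)) ≤
      4 * ∑ w ∈ Finset.Icc 1 N, ∑ v ∈ Finset.Icc w N,
          ((v : ℝ) + ε - (w : ℝ)) * ((10 : ℝ) ^ w / (10 : ℝ) ^ v) := by
  have hε0 : (0:ℝ) < ε := by linarith
  have hOPT : (N : ℝ) * ε ≤ ∑ w ∈ Finset.Icc 1 N, ∑ v ∈ Finset.Icc w N,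
      ((v : ℝ) + ε - (w : ℝ)) * ((10 : ℝ) ^ w / (10 : ℝ) ^ v) := by
    have hin : ∀ w ∈ Finset.Icc 1 N, ε ≤ ∑ v ∈ Finset.Icc w N,
        ((v : ℝ) + ε - (w : ℝ)) * ((10 : ℝ) ^ w / (10 : ℝ) ^ v) := by
      intro w hw
      obtain ⟨hw1, hw2⟩ := Finset.mem_Icc.mp hw
      have hmem : w ∈ Finset.Icc w N := Finset.mem_Icc.mpr ⟨le_rfl, hw2⟩
      have hval : ((w : ℝ) + ε - (w : ℝ)) * ((10 : ℝ) ^ w / (10 : ℝ) ^ w) = ε := by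
        rw [div_self (by positivity)]; ring
      calc ε = ((w : ℝ) + ε - (w : ℝ)) * ((10 : ℝ) ^ w / (10 : ℝ) ^ w) := hval.symm
        _ ≤ ∑ v ∈ Finset.Icc w N, ((v : ℝ) + ε - (w : ℝ)) * ((10 : ℝ) ^ w / (10 : ℝ) ^ v) := by
          refine Finset.single_le_sum (f := fun v : ℕ => ((v : ℝ) + ε - (w : ℝ)) * ((10 : ℝ) ^ w / (10 : ℝ) ^ v)) (fun v hv => ?_) hmem
          obtain ⟨hv1, _⟩ := Finset.mem_Icc.mp hv
          have : (w : ℝ) ≤ (v : ℝ) := by exact_mod_cast hv1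
          have h10 : (0:ℝ) < (10 : ℝ) ^ w / (10 : ℝ) ^ v := by positivity
          nlinarith
    calc (N : ℝ) * ε = ∑ _w ∈ Finset.Icc 1 N, ε := by
          rw [Finset.sum_const, Nat.card_Icc]
          simp [nsmul_eq_mul]
      _ ≤ _ := Finset.sum_le_sum hin
  have hGFT := gft18 N ε hε1 hε2 p
  calc (N : ℝ) * (∑ w ∈ Finset.Icc 1 N, ∑ v ∈ Finset.Icc 1 N,
          (if (w : ℝ) ≤ p ∧ p ≤ (v : ℝ) + ε then
            ((v : ℝ) + ε - (w : ℝ)) * ((10 : ℝ) ^ w / (10 : ℝ) ^ v) else 0))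
      ≤ (N : ℝ) * (4 * ε) := by
        apply mul_le_mul_of_nonneg_left hGFT (by positivity)
    _ = 4 * ((N : ℝ) * ε) := by ring
    _ ≤ _ := by linarith
end

section
/- Fix a natural number N ≥ 1 and let α = (10/9)·(1 − 10^(−N)). Define r = (10^(1−N)/α²)·Σ_{w=1}^{N} Σ_{v=w}^{N} 10^(w−v), with sums over the reals and 10^(w−v) = 10^w / 10^v. Then r ≥ 10^(−N); equivalently, N ≥ log₁₀(1/r). -/
theorem stmt19 (N : ℕ) (hN : 1 ≤ N) (α r : ℝ)
    (hα : α = (10 / 9) * (1 - 1 / (10 : ℝ) ^ N))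
    (hr : r = ((10 : ℝ) / (10 : ℝ) ^ N / α ^ 2) *
      ∑ w ∈ Finset.Icc 1 N, ∑ v ∈ Finset.Icc w N, ((10 : ℝ) ^ w / (10 : ℝ) ^ v)) :
    1 / (10 : ℝ) ^ N ≤ r ∧ Real.logb 10 (1 / r) ≤ (N : ℝ) := by
  have hpow : (1 : ℝ) < (10 : ℝ) ^ N := one_lt_pow₀ (by norm_num) (by omega)
  have hpow0 : (0 : ℝ) < (10 : ℝ) ^ N := by positivity
  have hα0 : 0 < α := by
    rw [hα]
    have : 1 / (10 : ℝ) ^ N < 1 := by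
      rw [div_lt_one hpow0]; exact hpow
    nlinarith
  have hαle : α ≤ 10 / 9 := by
    rw [hα]
    have : 0 ≤ 1 / (10 : ℝ) ^ N := by positivity
    nlinarith
  -- the sum is at least 1
  have hS : (1 : ℝ) ≤ ∑ w ∈ Finset.Icc 1 N, ∑ v ∈ Finset.Icc w N,
      ((10 : ℝ) ^ w / (10 : ℝ) ^ v) := by
    have h1 : (1 : ℕ) ∈ Finset.Icc 1 N := by simp [hN]
    have hinner : ∀ w ∈ Finset.Icc 1 N,
        (1 : ℝ) ≤ ∑ v ∈ Finset.Icc w N, ((10 : ℝ) ^ w / (10 : ℝ) ^ v) := by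
      intro w hw
      simp only [Finset.mem_Icc] at hw
      have hwmem : w ∈ Finset.Icc w N := by simp [hw.2]
      calc (1 : ℝ) = (10 : ℝ) ^ w / (10 : ℝ) ^ w := by
            rw [div_self (by positivity)]
        _ ≤ _ := Finset.single_le_sum (f := fun v => (10 : ℝ) ^ w / (10 : ℝ) ^ v)
            (fun v _ => by positivity) hwmem
    calc (1 : ℝ) ≤ ∑ v ∈ Finset.Icc 1 N, ((10 : ℝ) ^ 1 / (10 : ℝ) ^ v) :=
          hinner 1 h1
      _ ≤ _ := Finset.single_le_sum
          (f := fun w => ∑ v ∈ Finset.Icc w N, ((10 : ℝ) ^ w / (10 : ℝ) ^ v))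
          (fun w _ => Finset.sum_nonneg fun v _ => by positivity) h1
  have hcoef : 1 / (10 : ℝ) ^ N ≤ (10 : ℝ) / (10 : ℝ) ^ N / α ^ 2 := by
    rw [div_div, div_le_div_iff₀ hpow0 (by positivity)]
    nlinarith [mul_le_mul hαle hαle hα0.le (by norm_num : (0:ℝ) ≤ 10/9), hpow0.le, mul_le_mul_of_nonneg_right (mul_le_mul hαle hαle hα0.le (by norm_num : (0:ℝ) ≤ 10/9)) hpow0.le]
  have hr1 : 1 / (10 : ℝ) ^ N ≤ r := by
    rw [hr]
    calc 1 / (10 : ℝ) ^ N ≤ (10 : ℝ) / (10 : ℝ) ^ N / α ^ 2 := hcoef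
      _ = ((10 : ℝ) / (10 : ℝ) ^ N / α ^ 2) * 1 := by ring
      _ ≤ _ := by
          apply mul_le_mul_of_nonneg_left hS (by positivity)
  refine ⟨hr1, ?_⟩
  have hr0 : 0 < r := lt_of_lt_of_le (by positivity) hr1
  have h1r : 1 / r ≤ (10 : ℝ) ^ N := by
    rw [div_le_iff₀ hr0]
    calc (1 : ℝ) = (10 : ℝ) ^ N * (1 / (10 : ℝ) ^ N) := by
          field_simp
      _ ≤ (10 : ℝ) ^ N * r := by
          apply mul_le_mul_of_nonneg_left hr1 (le_of_lt hpow0)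
  calc Real.logb 10 (1 / r) ≤ Real.logb 10 ((10 : ℝ) ^ N) :=
        Real.logb_le_logb_of_le (by norm_num) (by positivity) h1r
    _ = N := by simp [Real.logb_pow]
end
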